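/- arXiv:2510.23871 — 11 statements merged into one kernel-verified Lean document; each statement's English description precedes it below -/
import Mathlib

section
/- Let G be a group, I and Λ index sets, and P a regular Λ×I matrix with entries in G⁰ that contains at least one zero entry. Then the center of the 0-Rees matrix semigroup M⁰[G;I,Λ;P] is exactly {0}, and M⁰[G;I,Λ;P] is not commutative. -/
variable {G : Type*} [Group G] {I Λ : Type*}

/-- Multiplication in the 0-Rees matrix semigroup `M⁰[G;I,Λ;P]` on `(I×G×Λ) ∪ {0}`.
The zero element is `none`, and a zero entry of `P` is encoded as `none`. -/
def reesMul (P : Λ → I → Option G) :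
    Option (I × G × Λ) → Option (I × G × Λ) → Option (I × G × Λ)
  | some (i, x, l), some (j, y, m) => (P l j).map fun p => (i, x * p * y, m)
  | _, _ => none

/-- If `P` is regular and contains at least one zero entry, then the center of
`M⁰[G;I,Λ;P]` is exactly `{0}`, and `M⁰[G;I,Λ;P]` is not commutative. -/
theorem stmt_2 (P : Λ → I → Option G)
    (hrow : ∀ l : Λ, ∃ i : I, P l i ≠ none)
    (hcol : ∀ i : I, ∃ l : Λ, P l i ≠ none)
    (hzero : ∃ (i : I) (l : Λ), P l i = none) :
    {s : Option (I × G × Λ) | ∀ t : Option (I × G × Λ), reesMul P s t = reesMul P t s} =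
      {(none : Option (I × G × Λ))} ∧
    ¬ (∀ s t : Option (I × G × Λ), reesMul P s t = reesMul P t s) := by
  obtain ⟨i₀, l₀, h₀⟩ := hzero
  have hcenter : {s : Option (I × G × Λ) |
      ∀ t : Option (I × G × Λ), reesMul P s t = reesMul P t s} =
      {(none : Option (I × G × Λ))} := by
    ext s
    simp only [Set.mem_setOf_eq, Set.mem_singleton_iff]
    constructor
    · intro hs
      by_contra hne
      obtain ⟨⟨i, x, l⟩, rfl⟩ := Option.ne_none_iff_exists'.mp hne
      -- Step 1: P l₀ i = none
      have h1 : P l₀ i = none := by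
        by_contra h1
        obtain ⟨q, hq⟩ := Option.ne_none_iff_exists'.mp h1
        have key := hs (some (i₀, 1, l₀))
        simp only [reesMul, hq, Option.map_some] at key
        cases hp : P l i₀ with
        | none => rw [hp] at key; simp at key
        | some p =>
          rw [hp] at key
          simp only [Option.map_some, Option.some.injEq, Prod.mk.injEq] at key
          obtain ⟨hii, -, hll⟩ := key
          subst hii
          subst hll
          rw [h₀] at hp
          exact Option.some_ne_none _ hp.symm
      -- Step 2: contradiction with row regularity of row l
      obtain ⟨j, hj⟩ := hrow l
      have key := hs (some (j, 1, l₀))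
      simp only [reesMul, h1, Option.map_none] at key
      rw [Option.map_eq_none_iff] at key
      exact hj key
    · rintro rfl t
      cases t <;> rfl
  refine ⟨hcenter, fun hcomm => ?_⟩
  have : (some (i₀, 1, l₀) : Option (I × G × Λ)) ∈
      {s : Option (I × G × Λ) | ∀ t, reesMul P s t = reesMul P t s} := fun t => hcomm _ t
  rw [hcenter] at this
  exact Option.some_ne_none _ (Set.mem_singleton_iff.mp this)
end

section
/- Let G be a finite group, I and Λ finite index sets, and let P and Q be regular Λ×I matrices with entries in G⁰, each containing at least one zero entry. If P and Q have the same zero pattern, i.e. for all i ∈ I and λ ∈ Λ, p_{λi} = 0 if and only if q_{λi} = 0, then the commuting graphs C(M⁰[G;I,Λ;P]) and C(M⁰[G;I,Λ;Q]) are isomorphic as simple graphs (there is a bijection between their vertex sets under which two vertices are adjacent in one graph if and only if their images are adjacent in the other). -/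
variable {G : Type*} [Group G] {I Λ : Type*}

/-- The commuting graph of `M⁰[G;I,Λ;P]`. Its vertex set is `I×G×Λ`, the set of
non-central elements (the center is `{0}`). -/
def commGraph (P : Λ → I → Option G) : SimpleGraph (I × G × Λ) where
  Adj a b := a ≠ b ∧ reesMul P (some a) (some b) = reesMul P (some b) (some a)
  symm := ⟨fun _ _ h => ⟨h.1.symm, h.2.symm⟩⟩
  loopless := ⟨fun _ h => h.1 rfl⟩

/-- The twist map: in a cell `(i,l)` where `P l i = some p` and `Q l i = some q`,
send `x` to `x * p * q⁻¹`; otherwise the identity. -/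
def tw (P Q : Λ → I → Option G) (i : I) (l : Λ) (x : G) : G :=
  match P l i, Q l i with
  | some p, some q => x * p * q⁻¹
  | _, _ => x

lemma tw_tw (P Q : Λ → I → Option G) (i : I) (l : Λ) (x : G) :
    tw Q P i l (tw P Q i l x) = x := by
  unfold tw
  rcases hp : P l i with _ | p <;> rcases hq : Q l i with _ | q <;> simp [hp, hq, mul_assoc]

lemma tw_some (P Q : Λ → I → Option G) {i : I} {l : Λ} {p q : G}
    (hp : P l i = some p) (hq : Q l i = some q) (x : G) :
    tw P Q i l x = x * p * q⁻¹ := by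
  unfold tw; rw [hp, hq]

/-- If the regular matrices `P` and `Q` (each with at least one zero entry) have the same
zero pattern, then the commuting graphs `C(M⁰[G;I,Λ;P])` and `C(M⁰[G;I,Λ;Q])` are
isomorphic as simple graphs. -/
theorem stmt_3 [Fintype G] [Fintype I] [Fintype Λ] (P Q : Λ → I → Option G)
    (hProw : ∀ l : Λ, ∃ i : I, P l i ≠ none)
    (hPcol : ∀ i : I, ∃ l : Λ, P l i ≠ none)
    (hQrow : ∀ l : Λ, ∃ i : I, Q l i ≠ none)
    (hQcol : ∀ i : I, ∃ l : Λ, Q l i ≠ none)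
    (hPzero : ∃ (i : I) (l : Λ), P l i = none)
    (hQzero : ∃ (i : I) (l : Λ), Q l i = none)
    (hpattern : ∀ (i : I) (l : Λ), P l i = none ↔ Q l i = none) :
    Nonempty (commGraph P ≃g commGraph Q) := by
  refine ⟨⟨⟨fun a => (a.1, tw P Q a.1 a.2.2 a.2.1, a.2.2),
          fun a => (a.1, tw Q P a.1 a.2.2 a.2.1, a.2.2),
          fun a => by simp [tw_tw], fun a => by simp [tw_tw]⟩, ?_⟩⟩
  rintro ⟨i, x, l⟩ ⟨j, y, m⟩
  simp only [commGraph, Equiv.coe_fn_mk, ne_eq, Prod.mk.injEq]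
  have hne : (i = j ∧ tw P Q i l x = tw P Q j m y ∧ l = m) ↔ (i = j ∧ x = y ∧ l = m) := by
    constructor
    · rintro ⟨rfl, h, rfl⟩
      refine ⟨rfl, ?_, rfl⟩
      have := congrArg (tw Q P i l) h
      rwa [tw_tw, tw_tw] at this
    · rintro ⟨rfl, rfl, rfl⟩; exact ⟨rfl, rfl, rfl⟩
  rw [not_iff_not.mpr hne]
  refine and_congr_right fun _ => ?_
  simp only [reesMul]
  rcases hlj : P l j with _ | p
  · have hQlj : Q l j = none := (hpattern j l).mp hlj
    rcases hmi : P m i with _ | p'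
    · have hQmi : Q m i = none := (hpattern i m).mp hmi
      simp [hQlj, hQmi]
    · obtain ⟨q', hQmi⟩ : ∃ q', Q m i = some q' := by
        rcases h : Q m i with _ | q'
        · exact absurd ((hpattern i m).mpr h ▸ hmi) (by simp [hmi, (hpattern i m).mpr h])
        · exact ⟨q', rfl⟩
      simp [hQlj, hQmi, hlj, hmi]
  · obtain ⟨q, hQlj⟩ : ∃ q, Q l j = some q := by
      rcases h : Q l j with _ | q
      · exact absurd hlj (by simp [(hpattern j l).mpr h])
      · exact ⟨q, rfl⟩
    rcases hmi : P m i with _ | p'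
    · have hQmi : Q m i = none := (hpattern i m).mp hmi
      simp [hQlj, hQmi, hlj, hmi]
    · obtain ⟨q', hQmi⟩ : ∃ q', Q m i = some q' := by
        rcases h : Q m i with _ | q'
        · exact absurd hmi (by simp [(hpattern i m).mpr h])
        · exact ⟨q', rfl⟩
      simp only [hQlj, hQmi, hlj, hmi, Option.map_some, Option.some.injEq, Prod.mk.injEq]
      by_cases hij : i = j
      · subst hij
        by_cases hlm : m = l
        · subst hlm
          obtain rfl : p = p' := by rw [hlj] at hmi; exact Option.some_injective _ hmi
          obtain rfl : q = q' := by rw [hQlj] at hQmi; exact Option.some_injective _ hQmi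
          rw [tw_some P Q hlj hQlj, tw_some P Q hlj hQlj]
          have key : (x * p * q⁻¹ * q * (y * p * q⁻¹) = y * p * q⁻¹ * q * (x * p * q⁻¹))
              ↔ (x * p * y = y * p * x) := by
            rw [show x * p * q⁻¹ * q * (y * p * q⁻¹) = x * p * y * (p * q⁻¹) by group,
                show y * p * q⁻¹ * q * (x * p * q⁻¹) = y * p * x * (p * q⁻¹) by group,
                mul_left_inj]
          constructor
          · rintro ⟨-, h, -⟩; exact ⟨rfl, key.mp h, rfl⟩
          · rintro ⟨-, h, -⟩; exact ⟨rfl, key.mpr h, rfl⟩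
        · simp [hlm, fun h : l = m => hlm h.symm]
      · simp [hij]
end

section
/- Let G be a finite group, I and Λ finite index sets, and P a regular Λ×I matrix with entries in G⁰ containing at least one zero entry. For every i ∈ I and λ ∈ Λ, the subgraph of C(M⁰[G;I,Λ;P]) induced by {i}×G×{λ} is isomorphic to the complete graph K_{|G|} if G is abelian or p_{λi} = 0, and is isomorphic to the graph join K_{|Z(G)|} ⋈ C(G) if G is non-abelian and p_{λi} ≠ 0 (here C(G) is the commuting graph of the group G). -/
variable {G : Type*} [Group G] {I Λ : Type*}

/-- The commuting graph of the group `G`: its vertices are the non-central elements of `G`,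
and distinct vertices are adjacent iff they commute. -/
def groupCommGraph (G : Type*) [Group G] : SimpleGraph {g : G // g ∉ Subgroup.center G} where
  Adj a b := a ≠ b ∧ (a : G) * (b : G) = (b : G) * (a : G)
  symm := ⟨fun _ _ h => ⟨h.1.symm, h.2.symm⟩⟩
  loopless := ⟨fun _ h => h.1 rfl⟩

/-- The graph join `G₁ ⋈ G₂` of two simple graphs: the vertex set is the disjoint union,
edges are those of `G₁`, those of `G₂`, and all pairs with one vertex in each part. -/
def graphJoin {α β : Type*} (G₁ : SimpleGraph α) (G₂ : SimpleGraph β) :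
    SimpleGraph (α ⊕ β) where
  Adj a b :=
    match a, b with
    | Sum.inl x, Sum.inl y => G₁.Adj x y
    | Sum.inr x, Sum.inr y => G₂.Adj x y
    | Sum.inl _, Sum.inr _ => True
    | Sum.inr _, Sum.inl _ => True
  symm := by
    refine ⟨?_⟩
    rintro (x | x) (y | y) h
    · exact G₁.adj_symm h
    · trivial
    · trivial
    · exact G₂.adj_symm h
  loopless := by
    refine ⟨?_⟩
    rintro (x | x) h
    · exact G₁.loopless.irrefl x h
    · exact G₂.loopless.irrefl x h

def vertEquiv (i : I) (l : Λ) :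
    {v : I × G × Λ // v ∈ {v : I × G × Λ | v.1 = i ∧ v.2.2 = l}} ≃ G where
  toFun v := v.1.2.1
  invFun g := ⟨(i, g, l), ⟨rfl, rfl⟩⟩
  left_inv := by
    rintro ⟨⟨a, g, b⟩, ha, hb⟩
    simp only [Set.mem_setOf_eq] at ha hb ⊢
    cases ha; cases hb; rfl
  right_inv g := rfl

lemma commGraph_adj (P : Λ → I → Option G) (a b : I × G × Λ) :
    (commGraph P).Adj a b ↔
      a ≠ b ∧ reesMul P (some a) (some b) = reesMul P (some b) (some a) := Iff.rfl

lemma key_adj (P : Λ → I → Option G) (i : I) (l : Λ) (x y : G) :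
    ((commGraph P).induce {v : I × G × Λ | v.1 = i ∧ v.2.2 = l}).Adj
        ((vertEquiv i l).symm x) ((vertEquiv i l).symm y) ↔
      (x ≠ y ∧ (P l i).map (fun p => x * p * y) = (P l i).map (fun p => y * p * x)) := by
  show (commGraph P).Adj (i, x, l) (i, y, l) ↔ _
  rw [commGraph_adj]
  have h1 : ((i, x, l) : I × G × Λ) ≠ (i, y, l) ↔ x ≠ y := by
    simp [Prod.ext_iff]
  have h2 : reesMul P (some (i, x, l)) (some (i, y, l))
        = reesMul P (some (i, y, l)) (some (i, x, l)) ↔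
      (P l i).map (fun p => x * p * y) = (P l i).map (fun p => y * p * x) := by
    cases hP : P l i with
    | none => simp [reesMul, hP]
    | some p => simp [reesMul, hP, Prod.ext_iff]
  rw [h1, h2]

/-- The subgraph of `C(M⁰[G;I,Λ;P])` induced by `{i}×G×{λ}` is isomorphic to the complete
graph `K_{|G|}` (here: the complete graph on `G`) if `G` is abelian or `p_{λi} = 0`, and to
the graph join `K_{|Z(G)|} ⋈ C(G)` if `G` is non-abelian and `p_{λi} ≠ 0`. -/
theorem stmt_4 [Fintype G] [Fintype I] [Fintype Λ] (P : Λ → I → Option G)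
    (hrow : ∀ l : Λ, ∃ i : I, P l i ≠ none)
    (hcol : ∀ i : I, ∃ l : Λ, P l i ≠ none)
    (hzero : ∃ (i : I) (l : Λ), P l i = none)
    (i : I) (l : Λ) :
    ((∀ a b : G, a * b = b * a) ∨ P l i = none →
      Nonempty (((commGraph P).induce {v : I × G × Λ | v.1 = i ∧ v.2.2 = l}) ≃g
        (⊤ : SimpleGraph G))) ∧
    (¬ (∀ a b : G, a * b = b * a) ∧ P l i ≠ none →
      Nonempty (((commGraph P).induce {v : I × G × Λ | v.1 = i ∧ v.2.2 = l}) ≃g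
        graphJoin (⊤ : SimpleGraph (Subgroup.center G)) (groupCommGraph G))) := by
  classical
  constructor
  · intro h
    refine ⟨{ toEquiv := vertEquiv i l, map_rel_iff' := ?_ }⟩
    intro a b
    obtain ⟨x, rfl⟩ : ∃ x, a = (vertEquiv i l).symm x :=
      ⟨vertEquiv i l a, ((vertEquiv i l).symm_apply_apply a).symm⟩
    obtain ⟨y, rfl⟩ : ∃ y, b = (vertEquiv i l).symm y :=
      ⟨vertEquiv i l b, ((vertEquiv i l).symm_apply_apply b).symm⟩
    rw [key_adj P i l x y]
    simp only [Equiv.apply_symm_apply, SimpleGraph.top_adj]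
    refine ⟨fun hne => ⟨hne, ?_⟩, fun h' => h'.1⟩
    rcases h with hab | hnone
    · cases hP : P l i with
      | none => simp
      | some p =>
        have hc : x * p * y = y * p * x := by
          rw [hab x p, mul_assoc, hab x y, ← mul_assoc, hab p y]
        simp [hc]
    · simp [hnone]
  · rintro ⟨hna, hp⟩
    obtain ⟨p, hP⟩ := Option.ne_none_iff_exists'.mp hp
    refine ⟨{ toEquiv := (vertEquiv i l).trans ((Equiv.mulLeft p).trans
        (Equiv.sumCompl (· ∈ Subgroup.center G)).symm), map_rel_iff' := ?_ }⟩
    intro a b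
    obtain ⟨x, rfl⟩ : ∃ x, a = (vertEquiv i l).symm x :=
      ⟨vertEquiv i l a, ((vertEquiv i l).symm_apply_apply a).symm⟩
    obtain ⟨y, rfl⟩ : ∃ y, b = (vertEquiv i l).symm y :=
      ⟨vertEquiv i l b, ((vertEquiv i l).symm_apply_apply b).symm⟩
    rw [key_adj P i l x y]
    have hmain : (x ≠ y ∧ (P l i).map (fun q => x * q * y) = (P l i).map (fun q => y * q * x))
        ↔ (p * x ≠ p * y ∧ (p * x) * (p * y) = (p * y) * (p * x)) := by
      rw [hP]
      constructor
      · rintro ⟨hne, heq⟩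
        have heq' : x * p * y = y * p * x := by simpa using heq
        refine ⟨fun hc => hne (mul_left_cancel hc), ?_⟩
        calc (p * x) * (p * y) = p * (x * p * y) := by group
          _ = p * (y * p * x) := by rw [heq']
          _ = (p * y) * (p * x) := by group
      · rintro ⟨hne, heq⟩
        refine ⟨fun hc => hne (by rw [hc]), ?_⟩
        have hc : x * p * y = y * p * x := by
          have h3 : p * (x * p * y) = p * (y * p * x) := by
            calc p * (x * p * y) = (p * x) * (p * y) := by group
              _ = (p * y) * (p * x) := heq
              _ = p * (y * p * x) := by group
          exact mul_left_cancel h3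
        simp [hc]
    rw [hmain]
    simp only [Equiv.trans_apply, Equiv.apply_symm_apply, Equiv.coe_mulLeft]
    set u := p * x with hu'
    set v := p * y with hv'
    by_cases hu : u ∈ Subgroup.center G <;> by_cases hv : v ∈ Subgroup.center G
    · rw [Equiv.sumCompl_symm_apply_of_pos hu, Equiv.sumCompl_symm_apply_of_pos hv]
      show (⟨u, hu⟩ : Subgroup.center G) ≠ ⟨v, hv⟩ ↔ _
      constructor
      · intro hne
        exact ⟨fun h => hne (Subtype.ext h), Subgroup.mem_center_iff.mp hv u⟩
      · rintro ⟨hne, -⟩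
        exact fun h => hne (congrArg Subtype.val h)
    · rw [Equiv.sumCompl_symm_apply_of_pos hu, Equiv.sumCompl_symm_apply_of_neg hv]
      show True ↔ _
      simp only [true_iff]
      exact ⟨fun h' => hv (h' ▸ hu), (Subgroup.mem_center_iff.mp hu v).symm⟩
    · rw [Equiv.sumCompl_symm_apply_of_neg hu, Equiv.sumCompl_symm_apply_of_pos hv]
      show True ↔ _
      simp only [true_iff]
      exact ⟨fun h' => hu (h' ▸ hv), Subgroup.mem_center_iff.mp hv u⟩
    · rw [Equiv.sumCompl_symm_apply_of_neg hu, Equiv.sumCompl_symm_apply_of_neg hv]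
      show ((⟨u, hu⟩ : {g : G // g ∉ Subgroup.center G}) ≠ ⟨v, hv⟩ ∧ u * v = v * u) ↔ _
      simp [Ne, Subtype.ext_iff]
end

section
/- Let G be a finite group, I and Λ finite index sets, and P a regular Λ×I matrix with entries in G⁰ containing at least one zero entry. Let i,j ∈ I and λ,μ ∈ Λ with (i,λ) ≠ (j,μ). Then the following are equivalent: (1) (i,λ) and (j,μ) are adjacent in the simplified graph G(I,Λ,P); (2) for all x,y ∈ G, (i,x,λ) and (j,y,μ) are adjacent in C(M⁰[G;I,Λ;P]); (3) there exist x,y ∈ G such that (i,x,λ) and (j,y,μ) are adjacent in C(M⁰[G;I,Λ;P]). -/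
variable {G : Type*} [Group G] {I Λ : Type*}

/-- The simplified graph `G(I,Λ,P)` on `I×Λ`: distinct vertices `(i,λ)` and `(j,μ)` are
adjacent iff `p_{λj} = 0` and `p_{μi} = 0`. -/
def simpGraph (P : Λ → I → Option G) : SimpleGraph (I × Λ) where
  Adj a b := a ≠ b ∧ P a.2 b.1 = none ∧ P b.2 a.1 = none
  symm := ⟨fun _ _ h => ⟨h.1.symm, h.2.2, h.2.1⟩⟩
  loopless := ⟨fun _ h => h.1 rfl⟩

/-- For `(i,λ) ≠ (j,μ)`, the following are equivalent: adjacency of `(i,λ)` and `(j,μ)` in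
`G(I,Λ,P)`; adjacency of `(i,x,λ)` and `(j,y,μ)` in `C(M⁰[G;I,Λ;P])` for all `x,y ∈ G`;
the same for some `x,y ∈ G`. -/
theorem stmt_5 [Fintype G] [Fintype I] [Fintype Λ] (P : Λ → I → Option G)
    (hrow : ∀ l : Λ, ∃ i : I, P l i ≠ none)
    (hcol : ∀ i : I, ∃ l : Λ, P l i ≠ none)
    (hzero : ∃ (i : I) (l : Λ), P l i = none)
    (i j : I) (l m : Λ) (hne : (i, l) ≠ (j, m)) :
    ((simpGraph P).Adj (i, l) (j, m) ↔
        ∀ x y : G, (commGraph P).Adj (i, x, l) (j, y, m)) ∧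
    ((∀ x y : G, (commGraph P).Adj (i, x, l) (j, y, m)) ↔
        ∃ x y : G, (commGraph P).Adj (i, x, l) (j, y, m)) := by
  have key : ∀ x y : G, (commGraph P).Adj (i, x, l) (j, y, m) ↔
      (P l j = none ∧ P m i = none) := by
    intro x y
    constructor
    · rintro ⟨hne', heq⟩
      simp only [reesMul] at heq
      cases hlj : P l j with
      | none =>
        cases hmi : P m i with
        | none => exact ⟨rfl, rfl⟩
        | some q => rw [hlj, hmi] at heq; simp at heq
      | some p =>
        cases hmi : P m i with
        | none => rw [hlj, hmi] at heq; simp at heq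
        | some q =>
          rw [hlj, hmi] at heq
          simp only [Option.map_some, Option.some.injEq, Prod.mk.injEq] at heq
          exact absurd (Prod.ext heq.1 heq.2.2.symm) hne
    · rintro ⟨h1, h2⟩
      refine ⟨fun h => hne ?_, by simp [reesMul, h1, h2]⟩
      obtain ⟨h1', h2'⟩ := Prod.mk.injEq .. ▸ h
      exact Prod.ext h1' (Prod.mk.injEq .. ▸ h2').2
  constructor
  · constructor
    · rintro ⟨_, h1, h2⟩ x y
      exact (key x y).mpr ⟨h1, h2⟩
    · intro h
      obtain ⟨h1, h2⟩ := (key 1 1).mp (h 1 1)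
      exact ⟨hne, h1, h2⟩
  · exact ⟨fun h => ⟨1, 1, h 1 1⟩, fun ⟨x, y, h⟩ a b => (key a b).mpr ((key x y).mp h)⟩
end

section
/- Let G be a finite group, I and Λ finite index sets, and P a regular Λ×I matrix with entries in G⁰ containing at least one zero entry. Then the commuting graph C(M⁰[G;I,Λ;P]) is connected if and only if the simplified graph G(I,Λ,P) is connected. -/
variable {G : Type*} [Group G] {I Λ : Type*}

lemma adj1 (P : Λ → I → Option G) {i j : I} {l m : Λ} {x y : G}
    (hne : (i, x, l) ≠ (j, y, m)) (h1 : P l j = none) (h2 : P m i = none) :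
    (commGraph P).Adj (i, x, l) (j, y, m) := by
  refine ⟨hne, ?_⟩
  show (P l j).map _ = (P m i).map _
  simp [h1, h2]

lemma adj_proj (P : Λ → I → Option G) {i j : I} {l m : Λ} {x y : G}
    (h : (commGraph P).Adj (i, x, l) (j, y, m)) :
    (i, l) = (j, m) ∨ (simpGraph P).Adj (i, l) (j, m) := by
  obtain ⟨hne, hcomm⟩ := h
  have hcomm' : (P l j).map (fun p => (i, x * p * y, m))
      = (P m i).map (fun q => (j, y * q * x, l)) := hcomm
  rcases h1 : P l j with _ | p <;> rcases h2 : P m i with _ | q <;>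
      simp [h1, h2] at hcomm'
  · by_cases heq : (i, l) = (j, m)
    · exact Or.inl heq
    · exact Or.inr ⟨heq, h1, h2⟩
  · exact Or.inl (by simp [hcomm'.1, hcomm'.2.2])

lemma reach_proj (P : Λ → I → Option G) {a b : I × G × Λ}
    (h : (commGraph P).Reachable a b) :
    (simpGraph P).Reachable (a.1, a.2.2) (b.1, b.2.2) := by
  obtain ⟨w⟩ := h
  induction w with
  | nil => exact SimpleGraph.Reachable.refl _
  | @cons u v c hadj p ih =>
    obtain ⟨i, x, l⟩ := u
    obtain ⟨j, y, m⟩ := v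
    rcases adj_proj P hadj with heq | hadj'
    · exact heq ▸ ih
    · exact (hadj'.reachable).trans ih

lemma reach_lift (P : Λ → I → Option G) {a b : I × Λ}
    (h : (simpGraph P).Reachable a b) (x : G) :
    (commGraph P).Reachable (a.1, x, a.2) (b.1, x, b.2) := by
  obtain ⟨w⟩ := h
  induction w with
  | nil => exact SimpleGraph.Reachable.refl _
  | @cons u v c hadj p ih =>
    obtain ⟨i, l⟩ := u
    obtain ⟨j, m⟩ := v
    refine ((adj1 P ?_ hadj.2.1 hadj.2.2).reachable).trans ih
    intro h
    simp only [Prod.mk.injEq] at h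
    exact hadj.1 (by simp [h.1, h.2.2])

/-- `C(M⁰[G;I,Λ;P])` is connected if and only if `G(I,Λ,P)` is connected. -/
theorem stmt_8 [Fintype G] [Fintype I] [Fintype Λ] (P : Λ → I → Option G)
    (hrow : ∀ l : Λ, ∃ i : I, P l i ≠ none)
    (hcol : ∀ i : I, ∃ l : Λ, P l i ≠ none)
    (hzero : ∃ (i : I) (l : Λ), P l i = none) :
    (commGraph P).Connected ↔ (simpGraph P).Connected := by
  obtain ⟨i0, l0, h0⟩ := hzero
  constructor
  · intro hc
    haveI : Nonempty (I × Λ) := ⟨(i0, l0)⟩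
    refine ⟨fun a b => ?_⟩
    obtain ⟨i, l⟩ := a
    obtain ⟨j, m⟩ := b
    exact reach_proj P (hc.preconnected (i, (1 : G), l) (j, 1, m))
  · intro hc
    have key : ∀ (i : I) (x : G) (l : Λ),
        (commGraph P).Reachable (i, x, l) (i, 1, l) := by
      intro i x l
      by_cases hx : x = 1
      · subst hx; exact SimpleGraph.Reachable.refl _
      by_cases hli : P l i = none
      · exact (adj1 P (by simp [hx]) hli hli).reachable
      · have r1 := reach_lift P (hc.preconnected (i, l) (i0, l0)) x
        have r2 := reach_lift P (hc.preconnected (i0, l0) (i, l)) (1 : G)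
        have e : (commGraph P).Adj (i0, x, l0) (i0, (1 : G), l0) :=
          ⟨by simp [hx], by show (P l0 i0).map _ = (P l0 i0).map _; simp [h0]⟩
        exact (r1.trans e.reachable).trans r2
    haveI : Nonempty (I × G × Λ) := ⟨(i0, 1, l0)⟩
    refine ⟨fun a b => ?_⟩
    obtain ⟨i, x, l⟩ := a
    obtain ⟨j, y, m⟩ := b
    exact ((key i x l).trans
      (reach_lift P (hc.preconnected (i, l) (j, m)) 1)).trans (key j y m).symm
end

section
/- Let G be a finite group, I and Λ finite index sets, and P a regular Λ×I matrix with entries in G⁰ containing at least one zero entry. Then the commuting graph C(M⁰[G;I,Λ;P]) is connected if and only if all three of the following hold: (a) every row of P contains at least one zero entry; (b) every column of P contains at least one zero entry; (c) there do not exist subsets I' ⊆ I and Λ' ⊆ Λ with ∅ ≠ I' ≠ I and ∅ ≠ Λ' ≠ Λ such that p_{λi} ≠ 0 for all (i,λ) ∈ (I'×(Λ∖Λ')) ∪ ((I∖I')×Λ'). -/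
variable {G : Type*} [Group G] {I Λ : Type*}

lemma aux_reesMul_some (P : Λ → I → Option G) (i j : I) (x y : G) (l m : Λ) :
    reesMul P (some (i, x, l)) (some (j, y, m)) = (P l j).map fun p => (i, x * p * y, m) := rfl

lemma aux_adj_of_none {P : Λ → I → Option G} {i j : I} {x y : G} {l m : Λ}
    (h1 : P l j = none) (h2 : P m i = none) (hne : (i, x, l) ≠ (j, y, m)) :
    (commGraph P).Adj (i, x, l) (j, y, m) := by
  refine ⟨hne, ?_⟩
  rw [aux_reesMul_some, aux_reesMul_some, h1, h2]; rfl

lemma aux_reach_of_none {P : Λ → I → Option G} {i j : I} {x y : G} {l m : Λ}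
    (h1 : P l j = none) (h2 : P m i = none) :
    (commGraph P).Reachable (i, x, l) (j, y, m) := by
  by_cases h : (i, x, l) = (j, y, m)
  · rw [h]
  · exact (aux_adj_of_none h1 h2 h).reachable

lemma aux_adj_cases {P : Λ → I → Option G} {i j : I} {x y : G} {l m : Λ}
    (h : (commGraph P).Adj (i, x, l) (j, y, m)) :
    (P l j = none ∧ P m i = none) ∨ (i = j ∧ l = m) := by
  have h2 := h.2
  rw [aux_reesMul_some, aux_reesMul_some] at h2
  rcases hq : P l j with _ | p <;> rcases hr : P m i with _ | q <;> rw [hq, hr] at h2 <;>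
    simp only [Option.map_none, Option.map_some] at h2
  · exact Or.inl ⟨rfl, rfl⟩
  · exact absurd h2 (by simp)
  · exact absurd h2 (by simp)
  · rw [Option.some_inj, Prod.mk.injEq, Prod.mk.injEq] at h2
    exact Or.inr ⟨h2.1, h2.2.2.symm⟩

lemma aux_walk_closed {V : Type*} {Gr : SimpleGraph V} {S : Set V}
    (hS : ∀ a b, Gr.Adj a b → a ∈ S → b ∈ S) :
    ∀ {u v : V}, Gr.Walk u v → u ∈ S → v ∈ S := by
  intro u v w
  induction w with
  | nil => exact id
  | cons h _ ih => exact fun hu => ih (hS _ _ h hu)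

/-- bipartite zero-pattern graph -/
def auxB (P : Λ → I → Option G) : SimpleGraph (I ⊕ Λ) where
  Adj u v := match u, v with
    | .inl i, .inr l => P l i = none
    | .inr l, .inl i => P l i = none
    | _, _ => False
  symm := ⟨by rintro (i | l) (j | m) h <;> simp_all⟩
  loopless := ⟨by rintro (i | l) h <;> simp_all⟩

@[simp] lemma auxB_adj_lr {P : Λ → I → Option G} {i : I} {l : Λ} :
    (auxB P).Adj (.inl i) (.inr l) ↔ P l i = none := Iff.rfl

@[simp] lemma auxB_adj_rl {P : Λ → I → Option G} {i : I} {l : Λ} :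
    (auxB P).Adj (.inr l) (.inl i) ↔ P l i = none := Iff.rfl

@[simp] lemma auxB_adj_ll {P : Λ → I → Option G} {i j : I} :
    ¬ (auxB P).Adj (.inl i) (.inl j) := fun h => h

@[simp] lemma auxB_adj_rr {P : Λ → I → Option G} {l m : Λ} :
    ¬ (auxB P).Adj (.inr l) (.inr m) := fun h => h

/-- parity: walks between an inl and an inr vertex have odd length -/
lemma auxB_parity {P : Λ → I → Option G} :
    ∀ {u v : I ⊕ Λ} (w : (auxB P).Walk u v),
      w.length % 2 = if u.isLeft = v.isLeft then 0 else 1 := by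
  intro u v w
  induction w with
  | nil => simp
  | @cons a b c h w ih =>
    have hab : a.isLeft ≠ b.isLeft := by
      rcases a with i | l <;> rcases b with j | m <;> simp_all
    rw [SimpleGraph.Walk.length_cons]
    rcases a with i | l <;> rcases b with j | m <;> rcases c with k | r <;> simp_all <;> omega

lemma auxB_parity_odd {P : Λ → I → Option G} {i : I} {l : Λ}
    (w : (auxB P).Walk (.inl i) (.inr l)) : w.length % 2 = 1 := by
  have := auxB_parity w
  simpa using this

/-- odd-length walks along a single edge -/
lemma auxB_pad {V : Type*} {Gr : SimpleGraph V} {u v : V} (h : Gr.Adj u v) :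
    ∀ s : ℕ, ∃ w : Gr.Walk u v, w.length = 2 * s + 1 := by
  intro s
  induction s with
  | zero => exact ⟨.cons h .nil, by simp⟩
  | succ n ih =>
    obtain ⟨w, hw⟩ := ih
    exact ⟨.cons h (.cons h.symm w), by simp [hw]; omega⟩

/-- pad an existing walk by 2k using a pendant edge at the end -/
lemma auxB_pad_walk {V : Type*} {Gr : SimpleGraph V} {u v z : V} (h : Gr.Adj v z) :
    ∀ k t : ℕ, (∃ w : Gr.Walk u v, w.length = t) → ∃ w : Gr.Walk u v, w.length = t + 2 * k := by
  intro k
  induction k with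
  | zero => simpa using fun t h => h
  | succ n ih =>
    intro t ⟨w, hw⟩
    obtain ⟨w', hw'⟩ := ih t ⟨w, hw⟩
    exact ⟨w'.append (.cons h (.cons h.symm .nil)), by simp [hw']; omega⟩

lemma aux_len1 {P : Λ → I → Option G} {j : I} {l : Λ}
    (w : (auxB P).Walk (.inl j) (.inr l)) (hw : w.length = 1) : P l j = none := by
  cases w with
  | @cons _ b _ h1 w1' =>
    rcases b with bi | ν
    · exact absurd h1 auxB_adj_ll
    · have hb : (Sum.inr ν : I ⊕ Λ) = Sum.inr l :=
        SimpleGraph.Walk.eq_of_length_eq_zero (p := w1') (by simpa using hw)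
      rw [Sum.inr.injEq] at hb
      subst hb
      exact h1

lemma aux_destruct {P : Λ → I → Option G} {j : I} {l : Λ} {t : ℕ}
    (w : (auxB P).Walk (.inl j) (.inr l)) (hw : w.length = t + 2) :
    ∃ (ν : Λ) (k : I) (w' : (auxB P).Walk (.inl k) (.inr l)),
      P ν j = none ∧ P ν k = none ∧ w'.length = t := by
  cases w with
  | @cons _ b _ h1 w1' =>
    rcases b with bi | ν
    · exact absurd h1 auxB_adj_ll
    cases w1' with
    | nil => simp at hw
    | @cons _ c _ h2 w2' =>
      rcases c with k | r
      · exact ⟨ν, k, w2', h1, h2, by simpa using hw⟩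
      · exact absurd h2 auxB_adj_rr

set_option maxHeartbeats 1000000 in
lemma aux_main {P : Λ → I → Option G} (t : ℕ) :
    ∀ (i : I) (x : G) (l : Λ) (j : I) (y : G) (m : Λ),
      (∃ w : (auxB P).Walk (.inl j) (.inr l), w.length = t) →
      (∃ w : (auxB P).Walk (.inl i) (.inr m), w.length = t) →
      (commGraph P).Reachable (i, x, l) (j, y, m) := by
  induction t using Nat.strong_induction_on with
  | _ t ih =>
  intro i x l j y m ⟨w1, hw1⟩ ⟨w2, hw2⟩
  match t, hw1, hw2 with
  | 0, hw1, hw2 =>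
    exact absurd (auxB_parity_odd w1) (by omega)
  | 1, hw1, hw2 =>
    exact aux_reach_of_none (aux_len1 w1 hw1) (aux_len1 w2 hw2)
  | (k+2), hw1, hw2 =>
    obtain ⟨ν, k', wk, hνj, hνk, hwk⟩ := aux_destruct w1 hw1
    obtain ⟨ρ, m', wm, hρi, hρm, hwm⟩ := aux_destruct w2 hw2
    have hko : k % 2 = 1 := hwk ▸ auxB_parity_odd wk
    have hk2 : 2 * (k / 2) + 1 = k := by omega
    have hlt : k < k + 2 := by omega
    have R1 : (commGraph P).Reachable (i, x, l) (k', 1, ρ) := by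
      refine ih k hlt i x l k' 1 ρ ⟨wk, hwk⟩ ?_
      obtain ⟨w, hw⟩ := auxB_pad (auxB_adj_lr.2 hρi) (k / 2)
      exact ⟨w, by omega⟩
    have R2 : (commGraph P).Reachable (k', 1, ρ) (m', 1, ν) := by
      refine ih k hlt k' 1 ρ m' 1 ν ?_ ?_
      · obtain ⟨w, hw⟩ := auxB_pad (auxB_adj_lr.2 hρm) (k / 2)
        exact ⟨w, by omega⟩
      · obtain ⟨w, hw⟩ := auxB_pad (auxB_adj_lr.2 hνk) (k / 2)
        exact ⟨w, by omega⟩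
    have R3 : (commGraph P).Reachable (m', 1, ν) (j, y, m) := by
      refine ih k hlt m' 1 ν j y m ?_ ⟨wm, hwm⟩
      obtain ⟨w, hw⟩ := auxB_pad (auxB_adj_lr.2 hνj) (k / 2)
      exact ⟨w, by omega⟩
    exact (R1.trans R2).trans R3

/-- `C(M⁰[G;I,Λ;P])` is connected iff: every row of `P` contains a zero entry, every
column of `P` contains a zero entry, and there is no "block decomposition", i.e. no proper
nonempty subsets `I' ⊆ I`, `Λ' ⊆ Λ` such that `p_{λi} ≠ 0` whenever `i ∈ I', λ ∉ Λ'` or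
`i ∉ I', λ ∈ Λ'`. -/
theorem stmt_9 [Fintype G] [Fintype I] [Fintype Λ] (P : Λ → I → Option G)
    (hrow : ∀ l : Λ, ∃ i : I, P l i ≠ none)
    (hcol : ∀ i : I, ∃ l : Λ, P l i ≠ none)
    (hzero : ∃ (i : I) (l : Λ), P l i = none) :
    (commGraph P).Connected ↔
      ((∀ l : Λ, ∃ i : I, P l i = none) ∧
       (∀ i : I, ∃ l : Λ, P l i = none) ∧
       ¬ ∃ (I' : Set I) (Λ' : Set Λ),
          I'.Nonempty ∧ I' ≠ Set.univ ∧ Λ'.Nonempty ∧ Λ' ≠ Set.univ ∧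
          ∀ (i : I) (l : Λ),
            ((i ∈ I' ∧ l ∉ Λ') ∨ (i ∉ I' ∧ l ∈ Λ')) → P l i ≠ none) := by
  constructor
  · intro hconn
    refine ⟨?_, ?_, ?_⟩
    · -- every row has a zero
      intro l0
      by_contra hno
      push_neg at hno
      obtain ⟨i1, l1, hz⟩ := hzero
      have hne : l1 ≠ l0 := fun h => hno i1 (h ▸ hz)
      obtain ⟨w⟩ := hconn.preconnected (i1, 1, l0) (i1, 1, l1)
      have : ((i1, 1, l1) : I × G × Λ).2.2 = l0 := by
        refine aux_walk_closed (S := {v : I × G × Λ | v.2.2 = l0}) ?_ w rfl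
        rintro ⟨a, xa, la⟩ ⟨b, xb, lb⟩ hadj (hla : la = l0)
        subst hla
        rcases aux_adj_cases hadj with ⟨h1, h2⟩ | ⟨h1, h2⟩
        · exact absurd h1 (hno b)
        · exact h2.symm
      exact hne this
    · -- every column has a zero
      intro i0
      by_contra hno
      push_neg at hno
      obtain ⟨i1, l1, hz⟩ := hzero
      have hne : i1 ≠ i0 := fun h => hno l1 (h ▸ hz)
      obtain ⟨w⟩ := hconn.preconnected (i0, 1, l1) (i1, 1, l1)
      have : ((i1, 1, l1) : I × G × Λ).1 = i0 := by
        refine aux_walk_closed (S := {v : I × G × Λ | v.1 = i0}) ?_ w rfl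
        rintro ⟨a, xa, la⟩ ⟨b, xb, lb⟩ hadj (hha : a = i0)
        subst hha
        rcases aux_adj_cases hadj with ⟨h1, h2⟩ | ⟨h1, h2⟩
        · exact absurd h2 (hno lb)
        · exact h1.symm
      exact hne this
    · -- no block decomposition
      rintro ⟨I', Λ', ⟨i1, hi1⟩, hIne, ⟨l1, hl1⟩, hLne, hcross⟩
      obtain ⟨i2, hi2⟩ : ∃ i, i ∉ I' := by
        by_contra h; push_neg at h; exact hIne (Set.eq_univ_of_forall h)
      obtain ⟨l2, hl2⟩ : ∃ l, l ∉ Λ' := by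
        by_contra h; push_neg at h; exact hLne (Set.eq_univ_of_forall h)
      obtain ⟨w⟩ := hconn.preconnected (i1, 1, l1) (i2, 1, l2)
      have : ((i2, 1, l2) : I × G × Λ).1 ∈ I' ∧ ((i2, 1, l2) : I × G × Λ).2.2 ∈ Λ' := by
        refine aux_walk_closed (S := {v : I × G × Λ | v.1 ∈ I' ∧ v.2.2 ∈ Λ'}) ?_ w ⟨hi1, hl1⟩
        rintro ⟨a, xa, la⟩ ⟨b, xb, lb⟩ hadj ⟨haI, haL⟩
        rcases aux_adj_cases hadj with ⟨h1, h2⟩ | ⟨h1, h2⟩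
        · constructor
          · by_contra hbI
            exact hcross b la (Or.inr ⟨hbI, haL⟩) h1
          · by_contra hbL
            exact hcross a lb (Or.inl ⟨haI, hbL⟩) h2
        · exact ⟨h1 ▸ haI, h2 ▸ haL⟩
      exact hi2 this.1
  · rintro ⟨ha, hb, hc⟩
    have hBpre : (auxB P).Preconnected := by
      by_contra hnp
      simp only [SimpleGraph.Preconnected] at hnp
      push_neg at hnp
      obtain ⟨u, v, huv⟩ := hnp
      set C : Set (I ⊕ Λ) := {w | (auxB P).Reachable u w} with hC
      have hcl : ∀ a b : I ⊕ Λ, (auxB P).Adj a b → a ∈ C → b ∈ C :=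
        fun a b hadj haC => haC.trans hadj.reachable
      have hIne : ∃ i, Sum.inl i ∈ C := by
        rcases u with i0 | l0
        · exact ⟨i0, SimpleGraph.Reachable.refl _⟩
        · obtain ⟨i, hi⟩ := ha l0
          exact ⟨i, hcl _ _ (auxB_adj_rl.2 hi) (SimpleGraph.Reachable.refl _)⟩
      have hLne : ∃ l, Sum.inr l ∈ C := by
        rcases u with i0 | l0
        · obtain ⟨l, hl⟩ := hb i0
          exact ⟨l, hcl _ _ (auxB_adj_lr.2 hl) (SimpleGraph.Reachable.refl _)⟩
        · exact ⟨l0, SimpleGraph.Reachable.refl _⟩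
      have hInu : ∃ i, Sum.inl i ∉ C := by
        rcases v with i0 | l0
        · exact ⟨i0, huv⟩
        · by_contra h
          push_neg at h
          obtain ⟨i, hi⟩ := ha l0
          exact huv (hcl _ _ (auxB_adj_lr.2 hi) (h i))
      have hLnu : ∃ l, Sum.inr l ∉ C := by
        rcases v with i0 | l0
        · by_contra h
          push_neg at h
          obtain ⟨l, hl⟩ := hb i0
          exact huv (hcl _ _ (auxB_adj_rl.2 hl) (h l))
        · exact ⟨l0, huv⟩
      refine hc ⟨{i | Sum.inl i ∈ C}, {l | Sum.inr l ∈ C}, hIne, ?_, hLne, ?_, ?_⟩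
      · obtain ⟨i2, hi2⟩ := hInu
        intro h
        exact hi2 (show i2 ∈ {i | Sum.inl i ∈ C} from h ▸ Set.mem_univ i2)
      · obtain ⟨l2, hl2⟩ := hLnu
        intro h
        exact hl2 (show l2 ∈ {l | Sum.inr l ∈ C} from h ▸ Set.mem_univ l2)
      · rintro i l (⟨hiI, hlL⟩ | ⟨hiI, hlL⟩) hP
        · exact hlL (hcl _ _ (auxB_adj_lr.2 hP) hiI)
        · exact hiI (hcl _ _ (auxB_adj_rl.2 hP) hlL)
    rw [SimpleGraph.connected_iff]
    refine ⟨?_, ?_⟩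
    · rintro ⟨i, x, l⟩ ⟨j, y, m⟩
      obtain ⟨w1⟩ := hBpre (Sum.inl j) (Sum.inr l)
      obtain ⟨w2⟩ := hBpre (Sum.inl i) (Sum.inr m)
      have h1o := auxB_parity_odd w1
      have h2o := auxB_parity_odd w2
      obtain ⟨ia, hia⟩ := ha l
      obtain ⟨ib, hib⟩ := ha m
      obtain ⟨w1', hw1'⟩ :=
        auxB_pad_walk (auxB_adj_rl.2 hia) ((w2.length - 1) / 2) w1.length ⟨w1, rfl⟩
      obtain ⟨w2', hw2'⟩ :=
        auxB_pad_walk (auxB_adj_rl.2 hib) ((w1.length - 1) / 2) w2.length ⟨w2, rfl⟩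
      exact aux_main (w1.length + w2.length - 1) i x l j y m ⟨w1', by omega⟩ ⟨w2', by omega⟩
    · obtain ⟨i, l, _⟩ := hzero
      exact ⟨(i, 1, l)⟩
end

section
/- Let G be a finite group, I and Λ finite index sets, and P a regular Λ×I matrix with entries in G⁰ containing at least one zero entry. Suppose λ ∈ Λ is such that row λ of P contains no zero entry, or i ∈ I is such that column i of P contains no zero entry. Then for every i ∈ I (respectively, every λ ∈ Λ), the subgraph of C(M⁰[G;I,Λ;P]) induced by {i}×G×{λ} is a connected component of C(M⁰[G;I,Λ;P]), and the diameter of this connected component equals 0 if G is trivial, 1 if G is abelian and non-trivial, and 2 if G is non-abelian. -/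
variable {G : Type*} [Group G] {I Λ : Type*}

/-- If row `λ` of `P` contains no zero entry, or column `i` of `P` contains no zero entry,
then the subgraph of `C(M⁰[G;I,Λ;P])` induced by `{i}×G×{λ}` is a connected component,
whose diameter is `0` if `G` is trivial, `1` if `G` is abelian and non-trivial, and `2` if
`G` is non-abelian. -/
theorem stmt_10 [Fintype G] [Fintype I] [Fintype Λ] (P : Λ → I → Option G)
    (hrow : ∀ l : Λ, ∃ i : I, P l i ≠ none)
    (hcol : ∀ i : I, ∃ l : Λ, P l i ≠ none)
    (hzero : ∃ (i : I) (l : Λ), P l i = none)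
    (i : I) (l : Λ)
    (h : (∀ i' : I, P l i' ≠ none) ∨ (∀ l' : Λ, P l' i ≠ none)) :
    (∃ c : (commGraph P).ConnectedComponent,
        c.supp = {v : I × G × Λ | v.1 = i ∧ v.2.2 = l}) ∧
    ((∀ x : G, x = 1) →
      ((commGraph P).induce {v : I × G × Λ | v.1 = i ∧ v.2.2 = l}).diam = 0) ∧
    ((∀ a b : G, a * b = b * a) → (∃ x : G, x ≠ 1) →
      ((commGraph P).induce {v : I × G × Λ | v.1 = i ∧ v.2.2 = l}).diam = 1) ∧
    (¬ (∀ a b : G, a * b = b * a) →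
      ((commGraph P).induce {v : I × G × Λ | v.1 = i ∧ v.2.2 = l}).diam = 2) := by
  classical
  set S : Set (I × G × Λ) := {v : I × G × Λ | v.1 = i ∧ v.2.2 = l} with hS
  -- canonical form of elements of S
  have hformP : ∀ u : I × G × Λ, u ∈ S → u = (i, u.2.1, l) := by
    rintro ⟨j, x, m⟩ ⟨h1, h2⟩
    simp only [hS, Set.mem_setOf_eq] at h1 h2
    simp [h1, h2]
  -- the entry P l i is nonzero
  have hPli : P l i ≠ none := h.elim (fun H => H i) (fun H => H l)
  obtain ⟨p, hp⟩ : ∃ p, P l i = some p := Option.ne_none_iff_exists'.mp hPli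
  -- adjacency inside the fiber
  have hadj : ∀ x y : G, x ≠ y → x * p * y = y * p * x →
      (commGraph P).Adj (i, x, l) (i, y, l) := by
    intro x y hne hc
    refine ⟨by simp [Prod.ext_iff, hne], ?_⟩
    show (P l i).map _ = (P l i).map _
    rw [hp]
    simp [hc]
  -- edges starting in the fiber stay in the fiber
  have hclosed : ∀ (x : G) (w : I × G × Λ), (commGraph P).Adj (i, x, l) w → w ∈ S := by
    rintro x ⟨j, y, m⟩ hA
    have e := hA.2
    simp only [reesMul] at e
    rcases hq : P l j with _ | q
    · rcases h with hR | hC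
      · exact absurd hq (hR j)
      · rcases hr : P m i with _ | r
        · exact absurd hr (hC m)
        · rw [hq, hr] at e; simp at e
    · rcases hr : P m i with _ | r
      · rw [hq, hr] at e; simp at e
      · rw [hq, hr] at e
        simp only [Option.map_some, Option.some.injEq, Prod.mk.injEq] at e
        exact ⟨e.1.symm, e.2.2⟩
  -- the center vertex (i, p⁻¹, l) is adjacent to any other vertex of the fiber
  have hcadj : ∀ x : G, x ≠ p⁻¹ → (commGraph P).Adj (i, p⁻¹, l) (i, x, l) := by
    intro x hx
    exact hadj p⁻¹ x (fun hh => hx hh.symm) (by group)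
  have hreach : ∀ x : G, (commGraph P).Reachable (i, p⁻¹, l) (i, x, l) := by
    intro x
    by_cases hx : x = p⁻¹
    · subst hx; exact SimpleGraph.Reachable.refl _
    · exact (hcadj x hx).reachable
  refine ⟨?_, ?_, ?_, ?_⟩
  · -- connected component
    refine ⟨(commGraph P).connectedComponentMk (i, p⁻¹, l), ?_⟩
    ext v
    simp only [SimpleGraph.ConnectedComponent.mem_supp_iff,
      SimpleGraph.ConnectedComponent.eq]
    constructor
    · intro hv
      have key : ∀ (u w : I × G × Λ), (commGraph P).Walk u w → u ∈ S → w ∈ S := by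
        intro u w wlk
        induction wlk with
        | nil => exact id
        | cons ha q ih =>
            intro hu
            apply ih
            rw [hformP _ hu] at ha
            exact hclosed _ _ ha
      obtain ⟨wlk⟩ := hv.symm
      exact key _ _ wlk ⟨rfl, rfl⟩
    · intro hv
      rw [hformP v hv]
      exact (hreach v.2.1).symm
  · -- trivial group: diam = 0
    intro htriv
    have hsub : Subsingleton ↥S := by
      constructor
      intro a b
      apply Subtype.ext
      rw [hformP _ a.2, hformP _ b.2, htriv (a : I × G × Λ).2.1,
        htriv (b : I × G × Λ).2.1]
    exact SimpleGraph.diam_eq_zero.mpr (Or.inr hsub)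
  · -- abelian nontrivial: diam = 1
    rintro hab ⟨x₀, hx₀⟩
    have hnt : Nontrivial ↥S :=
      ⟨⟨⟨(i, x₀, l), rfl, rfl⟩, ⟨(i, 1, l), rfl, rfl⟩, by
        simp [Subtype.ext_iff, Prod.ext_iff, hx₀]⟩⟩
    rw [SimpleGraph.diam_eq_one]
    ext u v
    show (commGraph P).Adj (u : I × G × Λ) (v : I × G × Λ) ↔ u ≠ v
    constructor
    · intro hA hh
      exact hA.1 (congrArg Subtype.val hh)
    · intro huv
      rw [hformP _ u.2, hformP _ v.2]
      have hxy : (u : I × G × Λ).2.1 ≠ (v : I × G × Λ).2.1 := by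
        intro hh
        exact huv (Subtype.ext (by rw [hformP _ u.2, hformP _ v.2, hh]))
      exact hadj _ _ hxy (by rw [hab ((u : I × G × Λ).2.1 * p) (v : I × G × Λ).2.1,
        hab (u : I × G × Λ).2.1 p, mul_assoc])
  · -- nonabelian: diam = 2
    intro hnab
    push_neg at hnab
    obtain ⟨a, b, hab'⟩ := hnab
    set H := (commGraph P).induce S with hH
    set c' : ↥S := ⟨(i, p⁻¹, l), rfl, rfl⟩ with hc'
    have hc'adj : ∀ w : ↥S, w ≠ c' → H.Adj c' w := by
      intro w hw
      show (commGraph P).Adj ((i, p⁻¹, l) : I × G × Λ) (w : I × G × Λ)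
      rw [hformP _ w.2]
      apply hcadj
      intro hh
      exact hw (Subtype.ext (by rw [hformP _ w.2, hh]))
    have hle1 : ∀ w : ↥S, H.edist c' w ≤ 1 := by
      intro w
      by_cases hw : w = c'
      · subst hw; simp
      · exact le_of_eq (SimpleGraph.edist_eq_one_iff_adj.mpr (hc'adj w hw))
    have hupper : ∀ u v : ↥S, H.edist u v ≤ 2 := by
      intro u v
      calc H.edist u v ≤ H.edist u c' + H.edist c' v := SimpleGraph.edist_triangle
        _ ≤ 1 + 1 := by
            gcongr
            · rw [SimpleGraph.edist_comm]; exact hle1 u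
            · exact hle1 v
        _ = 2 := one_add_one_eq_two
    -- two vertices at distance 2
    have hba : a * p⁻¹ ≠ b * p⁻¹ := by
      intro hh
      exact hab' (by rw [mul_right_cancel hh])
    set u : ↥S := ⟨(i, a * p⁻¹, l), rfl, rfl⟩ with hu
    set v : ↥S := ⟨(i, b * p⁻¹, l), rfl, rfl⟩ with hv
    have huv : u ≠ v := by
      simp [hu, hv, Subtype.ext_iff, Prod.ext_iff, hba]
    have hnadj : ¬ H.Adj u v := by
      intro hA
      have hA' : (commGraph P).Adj (i, a * p⁻¹, l) (i, b * p⁻¹, l) := hA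
      have e := hA'.2
      simp only [reesMul] at e
      rw [hp] at e
      simp only [Option.map_some, Option.some.injEq, Prod.mk.injEq, true_and,
        and_true] at e
      apply hab'
      have e1 : a * p⁻¹ * p * (b * p⁻¹) = a * b * p⁻¹ := by group
      have e2 : b * p⁻¹ * p * (a * p⁻¹) = b * a * p⁻¹ := by group
      rw [e1, e2] at e
      exact mul_right_cancel e
    have h2le : (2 : ℕ∞) ≤ H.edist u v := by
      have h0 : (0 : ℕ∞) < H.edist u v := H.edist_pos_of_ne huv
      have h1 : H.edist u v ≠ 1 := fun hh =>
        hnadj (SimpleGraph.edist_eq_one_iff_adj.mp hh)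
      have hlt : (1 : ℕ∞) < H.edist u v :=
        lt_of_le_of_ne (Order.one_le_iff_pos.mpr h0) (Ne.symm h1)
      have h2 := Order.add_one_le_of_lt hlt
      rwa [one_add_one_eq_two] at h2
    have hed : H.ediam = 2 :=
      le_antisymm (SimpleGraph.ediam_le_of_edist_le hupper)
        (le_trans h2le SimpleGraph.edist_le_ediam)
    rw [SimpleGraph.diam, hed]
    rfl
end

section
/- Let G be a finite abelian group, I and Λ finite index sets, and P a regular Λ×I matrix with entries in G⁰ containing at least one zero entry. (1) If D₃is a ↔-submatrix of the zero-pattern of P and none of O_{1×3}, O_{3×1}, O_{2×2} is a ↔-submatrix of the zero-pattern of P, then the clique number of C(M⁰[G;I,Λ;P]) equals 3|G|. (2) If D₂ is a ↔-submatrix of the zero-pattern of P and neither O_{1×2} nor O_{2×1} is a ↔-submatrix of the zero-pattern of P, then the clique number of C(M⁰[G;I,Λ;P]) equals 2|G|. -/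
variable {G : Type*} [Group G] {I Λ : Type*}

/-- The all-zeros matrix `O_{n×m}` is a ↔-submatrix of the zero-pattern of `P`. -/
def OSub (P : Λ → I → Option G) (n m : ℕ) : Prop :=
  ∃ (Λ' : Finset Λ) (I' : Finset I), Λ'.card = n ∧ I'.card = m ∧
    ∀ l ∈ Λ', ∀ i ∈ I', P l i = none

/-- The matrix `D_k` (the `k×k` matrix with non-zero diagonal entries and zeros elsewhere)
is a ↔-submatrix of the zero-pattern of `P`. -/
def DSub (P : Λ → I → Option G) (k : ℕ) : Prop :=
  ∃ (f : Fin k → I) (g : Fin k → Λ), Function.Injective f ∧ Function.Injective g ∧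
    (∀ j, P (g j) (f j) ≠ none) ∧ ∀ j j', j ≠ j' → P (g j) (f j') = none

/-- Two distinct vertices in the same cell always commute (for abelian `G`). -/
lemma adj_same_cell (P : Λ → I → Option G) (habel : ∀ a b : G, a * b = b * a)
    {i : I} {l : Λ} {x y : G} (hxy : (i,x,l) ≠ (i,y,l)) :
    (commGraph P).Adj (i,x,l) (i,y,l) := by
  refine ⟨hxy, ?_⟩
  show (P l i).map (fun p => (i, x * p * y, l)) = (P l i).map (fun p => (i, y * p * x, l))
  cases P l i with
  | none => rfl
  | some p =>
    simp only [Option.map_some]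
    have : x * p * y = y * p * x := by
      calc x * p * y = y * (x * p) := habel _ _
        _ = y * (p * x) := by rw [habel x p]
        _ = y * p * x := (mul_assoc _ _ _).symm
    rw [this]

/-- Commuting vertices in distinct cells force both matrix entries to vanish. -/
lemma zero_of_comm (P : Λ → I → Option G) {i j : I} {x y : G} {l m : Λ}
    (hc : (i, l) ≠ (j, m))
    (h : reesMul P (some (i,x,l)) (some (j,y,m)) = reesMul P (some (j,y,m)) (some (i,x,l))) :
    P l j = none ∧ P m i = none := by
  simp only [reesMul] at h
  cases hp : P l j <;> cases hq : P m i <;> rw [hp, hq] at h <;> simp_all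

/-- Lower bound: `D_k` yields a clique of size `k·|G|`. -/
lemma cliqueNum_lower [Fintype G] [Fintype I] [Fintype Λ] (P : Λ → I → Option G)
    (habel : ∀ a b : G, a * b = b * a) {k : ℕ} (hD : DSub P k) :
    k * Fintype.card G ≤ (commGraph P).cliqueNum := by
  classical
  obtain ⟨f, g, hf, hg, hd, hz⟩ := hD
  set s : Finset (I × G × Λ) :=
    Finset.image (fun q : Fin k × G => (f q.1, q.2, g q.1)) Finset.univ with hs
  have hclique : (commGraph P).IsClique ↑s := by
    intro a ha b hb hab
    simp only [hs, Finset.coe_image, Set.mem_image] at ha hb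
    obtain ⟨⟨j, u⟩, -, rfl⟩ := ha
    obtain ⟨⟨j', v⟩, -, rfl⟩ := hb
    by_cases hj : j = j'
    · subst hj
      exact adj_same_cell P habel hab
    · refine ⟨hab, ?_⟩
      show reesMul P _ _ = reesMul P _ _
      have h1 : P (g j) (f j') = none := hz _ _ hj
      have h2 : P (g j') (f j) = none := hz _ _ (Ne.symm hj)
      show (P (g j) (f j')).map _ = (P (g j') (f j)).map _
      rw [h1, h2]
      rfl
  have hcard : s.card = k * Fintype.card G := by
    rw [hs, Finset.card_image_of_injective _ ?_, Finset.card_univ, Fintype.card_prod,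
      Fintype.card_fin]
    rintro ⟨j, u⟩ ⟨j', v⟩ h
    simp only [Prod.mk.injEq] at h
    exact Prod.ext (hf h.1) h.2.1
  calc k * Fintype.card G = s.card := hcard.symm
    _ ≤ _ := hclique.card_le_cliqueNum

/-- Upper bound: if `k+1` pairwise-"zero" distinct cells are impossible, then the
clique number is at most `k·|G|`. -/
lemma cliqueNum_upper [Fintype G] [Fintype I] [Fintype Λ] (P : Λ → I → Option G) {k : ℕ}
    (H : ∀ T : Finset (I × Λ), T.card = k + 1 →
      (∀ u ∈ T, ∀ v ∈ T, u ≠ v → P u.2 v.1 = none) → False) :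
    (commGraph P).cliqueNum ≤ k * Fintype.card G := by
  classical
  obtain ⟨s, hs⟩ := (commGraph P).exists_isNClique_cliqueNum
  rw [← hs.card_eq]
  by_contra hlt
  push_neg at hlt
  set cell : I × G × Λ → I × Λ := fun v => (v.1, v.2.2) with hcell
  have hfib : ∀ c ∈ s.image cell, (s.filter fun v => cell v = c).card ≤ Fintype.card G := by
    intro c _
    have : (s.filter fun v => cell v = c).card ≤ (Finset.univ : Finset G).card := by
      refine Finset.card_le_card_of_injOn (fun v => v.2.1) (fun _ _ => Finset.mem_univ _) ?_
      intro v hv w hw hvw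
      simp only [Finset.coe_filter, Set.mem_setOf_eq, hcell] at hv hw
      have heq : (v.1, v.2.2) = (w.1, w.2.2) := hv.2.trans hw.2.symm
      rw [Prod.mk.injEq] at heq
      exact Prod.ext heq.1 (Prod.ext hvw heq.2)
    simpa using this
  have hcount : s.card ≤ Fintype.card G * (s.image cell).card :=
    Finset.card_le_mul_card_image s (Fintype.card G) hfib
  have himcard : k + 1 ≤ (s.image cell).card := by
    by_contra hcon
    push_neg at hcon
    have h1 : (s.image cell).card ≤ k := Nat.lt_succ_iff.mp hcon
    have h2 : s.card ≤ Fintype.card G * k :=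
      hcount.trans (Nat.mul_le_mul_left _ h1)
    rw [mul_comm] at h2
    omega
  obtain ⟨T, hTsub, hTcard⟩ := Finset.exists_subset_card_eq himcard
  refine H T hTcard ?_
  intro u hu v hv huv
  obtain ⟨a, ha, hau⟩ := Finset.mem_image.mp (hTsub hu)
  obtain ⟨b, hb, hbv⟩ := Finset.mem_image.mp (hTsub hv)
  have hab : a ≠ b := by
    intro h; exact huv (by rw [← hau, ← hbv, h])
  have hadj := hs.isClique (Finset.mem_coe.mpr ha) (Finset.mem_coe.mpr hb) hab
  obtain ⟨i, x, l⟩ := a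
  obtain ⟨j, y, m⟩ := b
  have hcne : (i, l) ≠ (j, m) := by
    intro h; apply huv; rw [← hau, ← hbv]; exact h
  have := zero_of_comm P hcne hadj.2
  rw [← hau, ← hbv]
  exact this.1

section Combinatorics

variable [DecidableEq I] [DecidableEq Λ]

/-- If two of three pairwise-zero cells lie in the same row, we find `O_{1×3}` or `O_{2×2}`
(using a third cell). -/
lemma row_pair3 (P : Λ → I → Option G) (a b c : I × Λ)
    (hab : a ≠ b) (hca : c ≠ a) (hcb : c ≠ b) (hl : a.2 = b.2)
    (zab : P a.2 b.1 = none) (zba : P b.2 a.1 = none) (zac : P a.2 c.1 = none)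
    (zca : P c.2 a.1 = none) (zcb : P c.2 b.1 = none) :
    OSub P 1 3 ∨ OSub P 2 2 := by
  have hi : a.1 ≠ b.1 := fun h => hab (Prod.ext h hl)
  have zaa : P a.2 a.1 = none := by rw [hl]; exact zba
  by_cases hc1 : c.1 ≠ a.1 ∧ c.1 ≠ b.1
  · left
    refine ⟨{a.2}, {a.1, b.1, c.1}, Finset.card_singleton _, ?_, ?_⟩
    · rw [Finset.card_insert_of_notMem (by simp [hi, Ne.symm hc1.1]),
        Finset.card_pair (Ne.symm hc1.2)]
    · intro l hl' i hi'
      simp only [Finset.mem_singleton] at hl'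
      simp only [Finset.mem_insert, Finset.mem_singleton] at hi'
      subst hl'
      rcases hi' with rfl | rfl | rfl
      · exact zaa
      · exact zab
      · exact zac
  · have hc2 : c.2 ≠ a.2 := by
      intro h
      rcases not_and_or.mp hc1 with h1 | h1 <;> push_neg at h1
      · exact hca (Prod.ext h1 h)
      · exact hcb (Prod.ext h1 (h.trans hl))
    right
    refine ⟨{a.2, c.2}, {a.1, b.1}, Finset.card_pair (Ne.symm hc2), Finset.card_pair hi, ?_⟩
    intro l hl' i hi'
    simp only [Finset.mem_insert, Finset.mem_singleton] at hl' hi'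
    rcases hl' with rfl | rfl <;> rcases hi' with rfl | rfl
    · exact zaa
    · exact zab
    · exact zca
    · exact zcb

/-- Three pairwise-distinct, pairwise-zero cells force `O_{1×2}` or `O_{2×1}`. -/
lemma three_cells (P : Λ → I → Option G) (a b c : I × Λ)
    (hab : a ≠ b) (hac : a ≠ c) (hbc : b ≠ c)
    (zab : P a.2 b.1 = none) (zac : P a.2 c.1 = none) (zba : P b.2 a.1 = none)
    (zbc : P b.2 c.1 = none) (zca : P c.2 a.1 = none) (zcb : P c.2 b.1 = none) :
    OSub P 1 2 ∨ OSub P 2 1 := by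
  have pair : ∀ u v : I × Λ, u ≠ v → u.2 = v.2 →
      P u.2 v.1 = none → P v.2 u.1 = none → OSub P 1 2 := by
    intro u v huv hl zuv zvu
    have hi : u.1 ≠ v.1 := fun h => huv (Prod.ext h hl)
    refine ⟨{u.2}, {u.1, v.1}, Finset.card_singleton _, Finset.card_pair hi, ?_⟩
    intro l hl' i hi'
    simp only [Finset.mem_singleton] at hl'
    simp only [Finset.mem_insert, Finset.mem_singleton] at hi'
    subst hl'
    rcases hi' with rfl | rfl
    · rw [hl]; exact zvu
    · exact zuv
  by_cases h1 : a.2 = b.2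
  · exact Or.inl (pair a b hab h1 zab zba)
  by_cases h2 : a.2 = c.2
  · exact Or.inl (pair a c hac h2 zac zca)
  by_cases h3 : b.2 = c.2
  · exact Or.inl (pair b c hbc h3 zbc zcb)
  · right
    refine ⟨{b.2, c.2}, {a.1}, Finset.card_pair h3, Finset.card_singleton _, ?_⟩
    intro l hl' i hi'
    simp only [Finset.mem_insert, Finset.mem_singleton] at hl' hi'
    subst hi'
    rcases hl' with rfl | rfl
    · exact zba
    · exact zca

/-- Four pairwise-distinct, pairwise-zero cells force `O_{1×3}`, `O_{3×1}` or `O_{2×2}`. -/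
lemma four_cells (P : Λ → I → Option G) (a b c d : I × Λ)
    (hab : a ≠ b) (hac : a ≠ c) (had : a ≠ d) (hbc : b ≠ c) (hbd : b ≠ d) (hcd : c ≠ d)
    (zab : P a.2 b.1 = none) (zac : P a.2 c.1 = none) (zad : P a.2 d.1 = none)
    (zba : P b.2 a.1 = none) (zbc : P b.2 c.1 = none) (zbd : P b.2 d.1 = none)
    (zca : P c.2 a.1 = none) (zcb : P c.2 b.1 = none) (zcd : P c.2 d.1 = none)
    (zda : P d.2 a.1 = none) (zdb : P d.2 b.1 = none) (zdc : P d.2 c.1 = none) :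
    OSub P 1 3 ∨ OSub P 3 1 ∨ OSub P 2 2 := by
  have wrap : OSub P 1 3 ∨ OSub P 2 2 → OSub P 1 3 ∨ OSub P 3 1 ∨ OSub P 2 2 := by
    rintro (h | h)
    · exact Or.inl h
    · exact Or.inr (Or.inr h)
  by_cases h1 : a.2 = b.2
  · exact wrap (row_pair3 P a b c hab hac.symm hbc.symm h1 zab zba zac zca zcb)
  by_cases h2 : a.2 = c.2
  · exact wrap (row_pair3 P a c b hac hab.symm hbc h2 zac zca zab zba zbc)
  by_cases h3 : a.2 = d.2
  · exact wrap (row_pair3 P a d b had hab.symm hbd h3 zad zda zab zba zbd)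
  by_cases h4 : b.2 = c.2
  · exact wrap (row_pair3 P b c a hbc hab hac h4 zbc zcb zba zab zac)
  by_cases h5 : b.2 = d.2
  · exact wrap (row_pair3 P b d a hbd hab had h5 zbd zdb zba zab zad)
  by_cases h6 : c.2 = d.2
  · exact wrap (row_pair3 P c d a hcd hac had h6 zcd zdc zca zac zad)
  · refine Or.inr (Or.inl ⟨{b.2, c.2, d.2}, {a.1}, ?_, Finset.card_singleton _, ?_⟩)
    · rw [Finset.card_insert_of_notMem (by simp [h4, h5]), Finset.card_pair h6]
    · intro l hl' i hi'
      simp only [Finset.mem_insert, Finset.mem_singleton] at hl' hi'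
      subst hi'
      rcases hl' with rfl | rfl | rfl
      · exact zba
      · exact zca
      · exact zda

end Combinatorics

/-- For a finite abelian group `G`: (1) if `D₃` is a ↔-submatrix of the zero-pattern of `P`
and none of `O_{1×3}, O_{3×1}, O_{2×2}` is, then the clique number of `C(M⁰[G;I,Λ;P])`
equals `3|G|`; (2) if `D₂` is a ↔-submatrix and neither `O_{1×2}` nor `O_{2×1}` is, then the
clique number equals `2|G|`. -/
theorem stmt_13 [Fintype G] [Fintype I] [Fintype Λ] (P : Λ → I → Option G)
    (habel : ∀ a b : G, a * b = b * a)
    (hrow : ∀ l : Λ, ∃ i : I, P l i ≠ none)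
    (hcol : ∀ i : I, ∃ l : Λ, P l i ≠ none)
    (hzero : ∃ (i : I) (l : Λ), P l i = none) :
    (DSub P 3 → ¬ OSub P 1 3 → ¬ OSub P 3 1 → ¬ OSub P 2 2 →
      (commGraph P).cliqueNum = 3 * Fintype.card G) ∧
    (DSub P 2 → ¬ OSub P 1 2 → ¬ OSub P 2 1 →
      (commGraph P).cliqueNum = 2 * Fintype.card G) := by
  classical
  constructor
  · intro hD h13 h31 h22
    refine le_antisymm ?_ (cliqueNum_lower P habel hD)
    refine cliqueNum_upper P ?_
    intro T hTcard hTzero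
    obtain ⟨a, t, hat, rfl, ht3⟩ := Finset.card_eq_succ.mp hTcard
    obtain ⟨b, c, d, hbc, hbd, hcd, rfl⟩ := Finset.card_eq_three.mp ht3
    have hma : a ∈ insert a ({b, c, d} : Finset (I × Λ)) := Finset.mem_insert_self _ _
    have hmb : b ∈ insert a ({b, c, d} : Finset (I × Λ)) := by simp
    have hmc : c ∈ insert a ({b, c, d} : Finset (I × Λ)) := by simp
    have hmd : d ∈ insert a ({b, c, d} : Finset (I × Λ)) := by simp
    have hab : a ≠ b := fun h => hat (by simp [h])
    have hac : a ≠ c := fun h => hat (by simp [h])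
    have had : a ≠ d := fun h => hat (by simp [h])
    rcases four_cells P a b c d hab hac had hbc hbd hcd
      (hTzero a hma b hmb hab) (hTzero a hma c hmc hac) (hTzero a hma d hmd had)
      (hTzero b hmb a hma hab.symm) (hTzero b hmb c hmc hbc) (hTzero b hmb d hmd hbd)
      (hTzero c hmc a hma hac.symm) (hTzero c hmc b hmb hbc.symm) (hTzero c hmc d hmd hcd)
      (hTzero d hmd a hma had.symm) (hTzero d hmd b hmb hbd.symm) (hTzero d hmd c hmc hcd.symm)
      with h | h | h
    · exact h13 h
    · exact h31 h
    · exact h22 h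
  · intro hD h12 h21
    refine le_antisymm ?_ (cliqueNum_lower P habel hD)
    refine cliqueNum_upper P ?_
    intro T hTcard hTzero
    obtain ⟨a, b, c, hab, hac, hbc, rfl⟩ := Finset.card_eq_three.mp hTcard
    have hma : a ∈ ({a, b, c} : Finset (I × Λ)) := by simp
    have hmb : b ∈ ({a, b, c} : Finset (I × Λ)) := by simp
    have hmc : c ∈ ({a, b, c} : Finset (I × Λ)) := by simp
    rcases three_cells P a b c hab hac hbc
      (hTzero a hma b hmb hab) (hTzero a hma c hmc hac)
      (hTzero b hmb a hma hab.symm) (hTzero b hmb c hmc hbc)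
      (hTzero c hmc a hma hac.symm) (hTzero c hmc b hmb hbc.symm)
      with h | h
    · exact h12 h
    · exact h21 h
end

section
/- Let G be a finite group, I and Λ finite index sets, and P a regular Λ×I matrix with entries in G⁰ containing at least one zero entry. Assume it is not the case that G is abelian, D₃ is a ↔-submatrix of the zero-pattern of P and none of O_{1×3}, O_{3×1}, O_{2×2} is a ↔-submatrix of the zero-pattern of P; and assume it is not the case that G is abelian, D₂ is a ↔-submatrix of the zero-pattern of P and neither O_{1×2} nor O_{2×1} is a ↔-submatrix of the zero-pattern of P. Then the clique number of C(M⁰[G;I,Λ;P]) equals |G| · max{ n·m : n,m ≥ 1 and O_{n×m} is a ↔-submatrix of the zero-pattern of P }. -/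
variable {G : Type*} [Group G] {I Λ : Type*}

set_option linter.unusedSectionVars false
set_option maxHeartbeats 1000000

lemma rees_comm_cases {P : Λ → I → Option G} {i j : I} {x y : G} {l m : Λ}
    (h : reesMul P (some (i,x,l)) (some (j,y,m)) = reesMul P (some (j,y,m)) (some (i,x,l))) :
    (P l j = none ∧ P m i = none) ∨ (i = j ∧ l = m) := by
  have h1 : (P l j).map (fun p => (i, x*p*y, m)) = (P m i).map (fun p => (j, y*p*x, l)) := h
  cases hl : P l j with
  | none =>
    cases hm : P m i with
    | none => exact Or.inl ⟨rfl, rfl⟩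
    | some q => rw [hl, hm] at h1; simp at h1
  | some p =>
    cases hm : P m i with
    | none => rw [hl, hm] at h1; simp at h1
    | some q =>
      rw [hl, hm] at h1
      simp only [Option.map_some, Option.some.injEq, Prod.mk.injEq] at h1
      exact Or.inr ⟨h1.1, h1.2.2.symm⟩

lemma rees_comm_same_cell {P : Λ → I → Option G} {i : I} {x y : G} {l : Λ} {p : G}
    (hp : P l i = some p)
    (h : reesMul P (some (i,x,l)) (some (i,y,l)) = reesMul P (some (i,y,l)) (some (i,x,l))) :
    x * p * y = y * p * x := by
  have h1 : (P l i).map (fun q => (i, x*q*y, l)) = (P l i).map (fun q => (i, y*q*x, l)) := h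
  rw [hp] at h1
  simp only [Option.map_some, Option.some.injEq, Prod.mk.injEq] at h1
  exact h1.2.1

lemma comm_finset_card_le [Fintype G] (hna : ¬ ∀ a b : G, a * b = b * a)
    (T : Finset G) (hT : ∀ x ∈ T, ∀ y ∈ T, x * y = y * x) :
    2 * T.card ≤ Fintype.card G := by
  set H := Subgroup.closure (↑T : Set G) with hHdef
  have hcomm : ∀ x ∈ (↑T : Set G), ∀ y ∈ (↑T : Set G), x * y = y * x := by
    intro x hx y hy; exact hT x hx y hy
  letI : CommGroup ↥H := Subgroup.closureCommGroupOfComm hcomm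
  have hne : H ≠ ⊤ := by
    intro htop
    apply hna
    intro a b
    have ha : a ∈ H := htop ▸ Subgroup.mem_top a
    have hb : b ∈ H := htop ▸ Subgroup.mem_top b
    have := mul_comm (⟨a, ha⟩ : H) ⟨b, hb⟩
    exact congrArg Subtype.val this
  have h1 : T.card ≤ Nat.card H := by
    rw [← Set.ncard_coe_finset, ← Nat.card_coe_set_eq]
    exact Set.ncard_le_ncard Subgroup.subset_closure (Set.toFinite _)
  have hdvd := Subgroup.card_subgroup_dvd_card H
  obtain ⟨k, hk⟩ := hdvd
  have hGpos : 0 < Nat.card G := Nat.card_pos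
  have hk0 : k ≠ 0 := by rintro rfl; rw [mul_zero] at hk; omega
  have hk1 : k ≠ 1 := by
    rintro rfl
    rw [mul_one] at hk
    exact hne (Subgroup.eq_top_of_card_eq H hk.symm)
  have h2 : 2 ≤ k := by omega
  have hHpos : 0 < Nat.card H := Nat.card_pos
  have : 2 * Nat.card H ≤ Nat.card H * k := by nlinarith
  rw [← Nat.card_eq_fintype_card]
  omega

lemma fiber_card_le [Fintype G] {s : Finset (I × G × Λ)} (c : I × Λ)
    [DecidableEq I] [DecidableEq Λ] :
    (s.filter (fun v => (v.1, v.2.2) = c)).card ≤ Fintype.card G := by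
  classical
  apply Finset.card_le_card_of_injOn (fun v => v.2.1) (fun _ _ => Finset.mem_univ _)
  intro a ha b hb hab
  simp only [Finset.mem_coe, Finset.mem_filter] at ha hb
  have h1 : a.1 = c.1 := by rw [← ha.2]
  have h2 : a.2.2 = c.2 := by rw [← ha.2]
  have h3 : b.1 = c.1 := by rw [← hb.2]
  have h4 : b.2.2 = c.2 := by rw [← hb.2]
  exact Prod.ext (h1.trans h3.symm) (Prod.ext hab (h2.trans h4.symm))

lemma vert_eta {c : I × Λ} {v : I × G × Λ} (h : (v.1, v.2.2) = c) :
    v = (c.1, v.2.1, c.2) := by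
  obtain ⟨h1, h2⟩ := Prod.mk.injEq _ _ _ _ ▸ h
  exact Prod.ext h1 (Prod.ext rfl h2)

lemma diag_fiber_card_le [Fintype G] [DecidableEq I] [DecidableEq Λ] [DecidableEq G]
    {P : Λ → I → Option G}
    {s : Finset (I × G × Λ)} (hs : (commGraph P).IsClique ↑s)
    (hna : ¬ ∀ a b : G, a * b = b * a) {c : I × Λ} {p : G} (hp : P c.2 c.1 = some p) :
    2 * (s.filter (fun v => (v.1, v.2.2) = c)).card ≤ Fintype.card G := by
  set F := s.filter (fun v => (v.1, v.2.2) = c) with hF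
  set T := F.image (fun v => v.2.1 * p) with hT
  have hinj : ∀ v ∈ F, ∀ w ∈ F, v.2.1 * p = w.2.1 * p → v = w := by
    intro v hv w hw h
    have hv' := vert_eta (Finset.mem_filter.mp hv).2
    have hw' := vert_eta (Finset.mem_filter.mp hw).2
    rw [hv', hw']
    have := mul_right_cancel h
    rw [this]
  have hcard : T.card = F.card := Finset.card_image_of_injOn hinj
  have hcomm : ∀ x ∈ T, ∀ y ∈ T, x * y = y * x := by
    intro x hx y hy
    obtain ⟨v, hv, rfl⟩ := Finset.mem_image.mp hx
    obtain ⟨w, hw, rfl⟩ := Finset.mem_image.mp hy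
    by_cases hvw : v = w
    · rw [hvw]
    · have hvs := (Finset.mem_filter.mp hv).1
      have hws := (Finset.mem_filter.mp hw).1
      have hadj := hs hvs hws hvw
      have hv' := vert_eta (Finset.mem_filter.mp hv).2
      have hw' := vert_eta (Finset.mem_filter.mp hw).2
      have heq := hadj.2
      rw [hv', hw'] at heq
      have := rees_comm_same_cell hp heq
      calc v.2.1 * p * (w.2.1 * p) = (v.2.1 * p * w.2.1) * p := by group
        _ = (w.2.1 * p * v.2.1) * p := by rw [this]
        _ = w.2.1 * p * (v.2.1 * p) := by group
  have := comm_finset_card_le hna T hcomm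
  omega

lemma cross_none [DecidableEq I] [DecidableEq Λ] {P : Λ → I → Option G}
    {s : Finset (I × G × Λ)} (hs : (commGraph P).IsClique ↑s)
    {c1 c2 : I × Λ} (h1 : c1 ∈ s.image (fun v => (v.1, v.2.2)))
    (h2 : c2 ∈ s.image (fun v => (v.1, v.2.2))) (hne : c1 ≠ c2) :
    P c1.2 c2.1 = none := by
  obtain ⟨v, hv, hv'⟩ := Finset.mem_image.mp h1
  obtain ⟨w, hw, hw'⟩ := Finset.mem_image.mp h2
  have hvw : v ≠ w := by rintro rfl; exact hne (hv'.symm.trans hw')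
  have hadj := (hs hv hw hvw).2
  rw [vert_eta hv', vert_eta hw'] at hadj
  rcases rees_comm_cases hadj with hc | hc
  · exact hc.1
  · exact absurd (Prod.ext hc.1 hc.2) hne

lemma osub_build [DecidableEq I] [DecidableEq Λ] {P : Λ → I → Option G}
    {cells : Finset (I × Λ)}
    (hcross : ∀ c1 ∈ cells, ∀ c2 ∈ cells, c1 ≠ c2 → P c1.2 c2.1 = none)
    {Zc Da Db : Finset (I × Λ)} (hZ : Zc ⊆ cells) (hDa : Da ⊆ cells) (hDb : Db ⊆ cells)
    (hZnone : ∀ c ∈ Zc, P c.2 c.1 = none)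
    (hDanone : ∀ c ∈ Da, P c.2 c.1 ≠ none) (hDbnone : ∀ c ∈ Db, P c.2 c.1 ≠ none)
    (hab : Disjoint Da Db) :
    OSub P ((Zc.image Prod.snd).card + Da.card) ((Zc.image Prod.fst).card + Db.card) := by
  have hinjDa : Set.InjOn Prod.snd (Da : Set (I × Λ)) := by
    intro c1 h1 c2 h2 hsnd
    simp only [Finset.mem_coe] at h1 h2
    by_contra hne
    exact hDanone c2 h2 (by rw [← hsnd]; exact hcross c1 (hDa h1) c2 (hDa h2) hne)
  have hinjDb : Set.InjOn Prod.fst (Db : Set (I × Λ)) := by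
    intro c1 h1 c2 h2 hfst
    simp only [Finset.mem_coe] at h1 h2
    by_contra hne
    exact hDbnone c1 h1 (by rw [hfst]; exact hcross c1 (hDb h1) c2 (hDb h2) hne)
  have hdisjA : Disjoint (Zc.image Prod.snd) (Da.image Prod.snd) := by
    rw [Finset.disjoint_left]
    intro l hl hl'
    obtain ⟨c1, hc1, rfl⟩ := Finset.mem_image.mp hl
    obtain ⟨c2, hc2, hc2'⟩ := Finset.mem_image.mp hl'
    have hne : c2 ≠ c1 := by rintro rfl; exact hDanone c2 hc2 (hZnone c2 hc1)
    exact hDanone c2 hc2 (by rw [hc2']; exact hcross c1 (hZ hc1) c2 (hDa hc2) hne.symm)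
  have hdisjB : Disjoint (Zc.image Prod.fst) (Db.image Prod.fst) := by
    rw [Finset.disjoint_left]
    intro i hi hi'
    obtain ⟨c1, hc1, rfl⟩ := Finset.mem_image.mp hi
    obtain ⟨c2, hc2, hc2'⟩ := Finset.mem_image.mp hi'
    have hne : c2 ≠ c1 := by rintro rfl; exact hDbnone c2 hc2 (hZnone c2 hc1)
    exact hDbnone c2 hc2 (by rw [hc2']; exact hcross c2 (hDb hc2) c1 (hZ hc1) hne)
  refine ⟨Zc.image Prod.snd ∪ Da.image Prod.snd, Zc.image Prod.fst ∪ Db.image Prod.fst,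
    ?_, ?_, ?_⟩
  · rw [Finset.card_union_of_disjoint hdisjA, Finset.card_image_of_injOn hinjDa]
  · rw [Finset.card_union_of_disjoint hdisjB, Finset.card_image_of_injOn hinjDb]
  · intro l hl i hi
    rw [Finset.mem_union] at hl hi
    have hl' : ∃ c1, (c1 ∈ Zc ∨ c1 ∈ Da) ∧ c1.2 = l := by
      rcases hl with h | h
      · obtain ⟨c, hc, hc'⟩ := Finset.mem_image.mp h; exact ⟨c, Or.inl hc, hc'⟩
      · obtain ⟨c, hc, hc'⟩ := Finset.mem_image.mp h; exact ⟨c, Or.inr hc, hc'⟩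
    have hi' : ∃ c2, (c2 ∈ Zc ∨ c2 ∈ Db) ∧ c2.1 = i := by
      rcases hi with h | h
      · obtain ⟨c, hc, hc'⟩ := Finset.mem_image.mp h; exact ⟨c, Or.inl hc, hc'⟩
      · obtain ⟨c, hc, hc'⟩ := Finset.mem_image.mp h; exact ⟨c, Or.inr hc, hc'⟩
    obtain ⟨c1, hc1, rfl⟩ := hl'
    obtain ⟨c2, hc2, rfl⟩ := hi'
    have hc1m : c1 ∈ cells := hc1.elim (fun h => hZ h) (fun h => hDa h)
    have hc2m : c2 ∈ cells := hc2.elim (fun h => hZ h) (fun h => hDb h)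
    by_cases hne : c1 = c2
    · subst hne
      rcases hc1 with h | h
      · exact hZnone c1 h
      · rcases hc2 with h2 | h2
        · exact hZnone c1 h2
        · exact absurd h2 (Finset.disjoint_left.mp hab h)
    · exact hcross c1 hc1m c2 hc2m hne

lemma dsub_build [DecidableEq I] [DecidableEq Λ] {P : Λ → I → Option G}
    {cells Dc : Finset (I × Λ)}
    (hcross : ∀ c1 ∈ cells, ∀ c2 ∈ cells, c1 ≠ c2 → P c1.2 c2.1 = none)
    (hD : Dc ⊆ cells) (hDnone : ∀ c ∈ Dc, P c.2 c.1 ≠ none) :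
    DSub P Dc.card := by
  have hinjf : ∀ c1 ∈ Dc, ∀ c2 ∈ Dc, c1.1 = c2.1 → c1 = c2 := by
    intro c1 h1 c2 h2 hfst
    by_contra hne
    exact hDnone c1 h1 (by rw [hfst]; exact hcross c1 (hD h1) c2 (hD h2) hne)
  have hinjg : ∀ c1 ∈ Dc, ∀ c2 ∈ Dc, c1.2 = c2.2 → c1 = c2 := by
    intro c1 h1 c2 h2 hsnd
    by_contra hne
    exact hDnone c2 h2 (by rw [← hsnd]; exact hcross c1 (hD h1) c2 (hD h2) hne)
  have e := Dc.equivFin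
  have hvalne : ∀ j j' : Fin Dc.card, j ≠ j' →
      (e.symm j : I × Λ) ≠ (e.symm j' : I × Λ) := by
    intro j j' hjj h
    exact hjj (by rw [← Equiv.apply_symm_apply e j, ← Equiv.apply_symm_apply e j',
      Subtype.ext h])
  refine ⟨fun j => (e.symm j : I × Λ).1, fun j => (e.symm j : I × Λ).2, ?_, ?_, ?_, ?_⟩
  · intro j j' h
    by_contra hjj
    exact hvalne j j' hjj (hinjf _ (e.symm j).2 _ (e.symm j').2 h)
  · intro j j' h
    by_contra hjj
    exact hvalne j j' hjj (hinjg _ (e.symm j).2 _ (e.symm j').2 h)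
  · intro j
    exact hDnone _ (e.symm j).2
  · intro j j' hjj
    exact hcross _ (hD (e.symm j).2) _ (hD (e.symm j').2) (hvalne j j' hjj)

lemma clique_card_le [Fintype G] [Fintype I] [Fintype Λ] {P : Λ → I → Option G}
    {s : Finset (I × G × Λ)} (hs : (commGraph P).IsClique ↑s)
    (hcase1 : ¬ ((∀ a b : G, a * b = b * a) ∧ DSub P 3 ∧
        ¬ OSub P 1 3 ∧ ¬ OSub P 3 1 ∧ ¬ OSub P 2 2))
    (hcase2 : ¬ ((∀ a b : G, a * b = b * a) ∧ DSub P 2 ∧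
        ¬ OSub P 1 2 ∧ ¬ OSub P 2 1))
    {B : ℕ} (hB1 : 1 ≤ B)
    (hB : ∀ n m : ℕ, 1 ≤ n → 1 ≤ m → OSub P n m → n * m ≤ B) :
    s.card ≤ Fintype.card G * B := by
  classical
  set FG := Fintype.card G with hFG
  set fib := fun c : I × Λ => (s.filter (fun v => (v.1, v.2.2) = c)).card with hfib
  set cells := s.image (fun v => (v.1, v.2.2)) with hcells
  have hcross : ∀ c1 ∈ cells, ∀ c2 ∈ cells, c1 ≠ c2 → P c1.2 c2.1 = none :=
    fun c1 h1 c2 h2 hne => cross_none hs h1 h2 hne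
  set Zc := cells.filter (fun c => P c.2 c.1 = none) with hZc
  set Dc := cells.filter (fun c => ¬ (P c.2 c.1 = none)) with hDc
  have hZsub : Zc ⊆ cells := Finset.filter_subset _ _
  have hDsub : Dc ⊆ cells := Finset.filter_subset _ _
  have hZnone : ∀ c ∈ Zc, P c.2 c.1 = none := fun c hc => (Finset.mem_filter.mp hc).2
  have hDnone : ∀ c ∈ Dc, P c.2 c.1 ≠ none := fun c hc => (Finset.mem_filter.mp hc).2
  set z := Zc.card with hz
  set d := Dc.card with hd
  set nz := (Zc.image Prod.snd).card with hnz
  set mz := (Zc.image Prod.fst).card with hmz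
  have hcardsum : s.card = ∑ c ∈ cells, fib c :=
    Finset.card_eq_sum_card_fiberwise (fun v hv => Finset.mem_image_of_mem _ hv)
  have hZD : ∑ c ∈ Zc, fib c + ∑ c ∈ Dc, fib c = ∑ c ∈ cells, fib c :=
    Finset.sum_filter_add_sum_filter_not cells _ fib
  have hfible : ∀ c : I × Λ, fib c ≤ FG := fun c => fiber_card_le c
  have hZb : ∑ c ∈ Zc, fib c ≤ z * FG := by
    calc ∑ c ∈ Zc, fib c ≤ Zc.card • FG :=
          Finset.sum_le_card_nsmul _ _ _ (fun c _ => hfible c)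
      _ = z * FG := by rw [smul_eq_mul]
  have hDbw : ∑ c ∈ Dc, fib c ≤ d * FG := by
    calc ∑ c ∈ Dc, fib c ≤ Dc.card • FG :=
          Finset.sum_le_card_nsmul _ _ _ (fun c _ => hfible c)
      _ = d * FG := by rw [smul_eq_mul]
  have hzle : z ≤ mz * nz := by
    have hsub : Zc ⊆ (Zc.image Prod.fst) ×ˢ (Zc.image Prod.snd) := by
      intro c hc
      rw [Finset.mem_product]
      exact ⟨Finset.mem_image_of_mem _ hc, Finset.mem_image_of_mem _ hc⟩
    calc z ≤ ((Zc.image Prod.fst) ×ˢ (Zc.image Prod.snd)).card := Finset.card_le_card hsub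
      _ = mz * nz := by rw [Finset.card_product]
  have hsD : s.card = ∑ c ∈ Zc, fib c + ∑ c ∈ Dc, fib c := by omega
  have hDb2 : ¬(∀ a b : G, a*b=b*a) → 2 * ∑ c ∈ Dc, fib c ≤ d * FG := by
    intro hna
    have hb : ∀ c ∈ Dc, 2 * fib c ≤ FG := by
      intro c hc
      obtain ⟨p, hp⟩ := Option.ne_none_iff_exists'.mp (hDnone c hc)
      exact diag_fiber_card_le hs hna hp
    calc 2 * ∑ c ∈ Dc, fib c = ∑ c ∈ Dc, 2 * fib c := by rw [Finset.mul_sum]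
      _ ≤ Dc.card • FG := Finset.sum_le_card_nsmul _ _ _ hb
      _ = d * FG := by rw [smul_eq_mul]
  have hfinish : ∀ k : ℕ, s.card ≤ k * FG → k ≤ B → s.card ≤ FG * B := by
    intro k h1 h2
    calc s.card ≤ k * FG := h1
      _ ≤ B * FG := Nat.mul_le_mul_right FG h2
      _ = FG * B := Nat.mul_comm _ _
  by_cases hzero : Zc = ∅
  · -- no zero cells
    have hz0 : ∑ c ∈ Zc, fib c = 0 := by rw [hzero]; simp
    have hnz0 : (Zc.image Prod.snd).card = 0 := by rw [hzero]; simp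
    have hmz0 : (Zc.image Prod.fst).card = 0 := by rw [hzero]; simp
    have hscard : s.card ≤ d * FG := by omega
    have hsDonly : s.card = ∑ c ∈ Dc, fib c := by omega
    have hOa : ∀ a, 1 ≤ a → a < d → a * (d - a) ≤ B := by
      intro a ha had
      obtain ⟨Da, hDaDc, hDacard⟩ := Finset.exists_subset_card_eq (le_of_lt had)
      have hO := osub_build hcross hZsub (hDaDc.trans hDsub)
        ((Finset.sdiff_subset).trans hDsub) hZnone
        (fun c hc => hDnone c (hDaDc hc)) (fun c hc => hDnone c (Finset.mem_sdiff.mp hc).1)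
        (Finset.sdiff_disjoint.symm)
      rw [hnz0, hmz0, hDacard, Finset.card_sdiff_of_subset hDaDc, hDacard, zero_add, zero_add] at hO
      exact hB a (d - a) ha (by omega) hO
    have hdsub : DSub P d := dsub_build hcross hDsub hDnone
    have hcases : d = 0 ∨ d = 1 ∨ d = 2 ∨ d = 3 ∨ 4 ≤ d := by omega
    rcases hcases with h | h | h | h | h
    · rw [h] at hscard; exact le_trans (by omega) (Nat.zero_le _)
    · exact hfinish 1 (h ▸ hscard) hB1
    · by_cases habel : ∀ a b : G, a * b = b * a
      · have hdisj : OSub P 1 2 ∨ OSub P 2 1 := by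
          by_contra hcon
          push_neg at hcon
          exact hcase2 ⟨habel, h ▸ hdsub, hcon.1, hcon.2⟩
        have hBge : 2 ≤ B := by
          rcases hdisj with ho | ho
          · have := hB 1 2 (by omega) (by omega) ho; omega
          · have := hB 2 1 (by omega) (by omega) ho; omega
        exact hfinish 2 (h ▸ hscard) hBge
      · have h2 := hDb2 habel
        rw [h] at h2
        exact hfinish 1 (by omega) hB1
    · by_cases habel : ∀ a b : G, a * b = b * a
      · have hdisj : OSub P 1 3 ∨ OSub P 3 1 ∨ OSub P 2 2 := by
          by_contra hcon
          push_neg at hcon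
          exact hcase1 ⟨habel, h ▸ hdsub, hcon.1, hcon.2.1, hcon.2.2⟩
        have hBge : 3 ≤ B := by
          rcases hdisj with ho | ho | ho
          · have := hB 1 3 (by omega) (by omega) ho; omega
          · have := hB 3 1 (by omega) (by omega) ho; omega
          · have := hB 2 2 (by omega) (by omega) ho; omega
        exact hfinish 3 (h ▸ hscard) hBge
      · have h2 := hDb2 habel
        rw [h] at h2
        have hBge : 2 ≤ B := by have := hOa 1 (by omega) (by omega); omega
        exact hfinish 2 (by omega) hBge
    · have hBge : d ≤ B := by
        have h1 := hOa 2 (by omega) (by omega)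
        omega
      exact hfinish d hscard hBge
  · -- there is a zero cell
    have hZne : Zc.Nonempty := Finset.nonempty_iff_ne_empty.mpr hzero
    have hnz1 : 1 ≤ nz := Finset.card_pos.mpr (hZne.image _)
    have hmz1 : 1 ≤ mz := Finset.card_pos.mpr (hZne.image _)
    have hO := osub_build hcross hZsub (Finset.empty_subset cells) hDsub hZnone
      (fun c hc => absurd hc (Finset.notMem_empty c))
      hDnone (Finset.disjoint_left.mpr (fun a ha => absurd ha (Finset.notMem_empty a)))
    rw [Finset.card_empty, add_zero] at hO
    have hBge : nz * (mz + d) ≤ B := hB nz (mz + d) hnz1 (by omega) hO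
    have hkB : z + d ≤ B := by nlinarith
    have hscard : s.card ≤ (z + d) * FG := by
      rw [add_mul]; omega
    exact hfinish (z + d) hscard hkB

/-- Outside the two exceptional abelian cases, the clique number of `C(M⁰[G;I,Λ;P])` equals
`|G| · max{n·m : n,m ≥ 1 and O_{n×m} is a ↔-submatrix of the zero-pattern of P}`. -/
theorem stmt_14 [Fintype G] [Fintype I] [Fintype Λ] (P : Λ → I → Option G)
    (hrow : ∀ l : Λ, ∃ i : I, P l i ≠ none)
    (hcol : ∀ i : I, ∃ l : Λ, P l i ≠ none)
    (hzero : ∃ (i : I) (l : Λ), P l i = none)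
    (hcase1 : ¬ ((∀ a b : G, a * b = b * a) ∧ DSub P 3 ∧
        ¬ OSub P 1 3 ∧ ¬ OSub P 3 1 ∧ ¬ OSub P 2 2))
    (hcase2 : ¬ ((∀ a b : G, a * b = b * a) ∧ DSub P 2 ∧
        ¬ OSub P 1 2 ∧ ¬ OSub P 2 1)) :
    (commGraph P).cliqueNum =
      Fintype.card G *
        sSup {k : ℕ | ∃ n m : ℕ, 1 ≤ n ∧ 1 ≤ m ∧ OSub P n m ∧ k = n * m} := by

  classical
  set K := {k : ℕ | ∃ n m : ℕ, 1 ≤ n ∧ 1 ≤ m ∧ OSub P n m ∧ k = n * m} with hK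
  have hK1 : 1 ∈ K := by
    obtain ⟨i, l, hil⟩ := hzero
    exact ⟨1, 1, le_refl 1, le_refl 1,
      ⟨{l}, {i}, by simp, by simp, by simpa using hil⟩, rfl⟩
  have hKbdd : BddAbove K := by
    refine ⟨Fintype.card Λ * Fintype.card I, ?_⟩
    rintro k ⟨n, m, hn, hm, ⟨Λ', I', hΛc, hIc, _⟩, rfl⟩
    exact Nat.mul_le_mul (hΛc ▸ Finset.card_le_univ Λ') (hIc ▸ Finset.card_le_univ I')
  set M := sSup K with hM
  have hM1 : 1 ≤ M := le_csSup hKbdd hK1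
  have hMmem : M ∈ K := Nat.sSup_mem ⟨1, hK1⟩ hKbdd
  have hub : ∀ k ∈ K, k ≤ M := fun k hk => le_csSup hKbdd hk
  apply le_antisymm
  · obtain ⟨t, ht⟩ := (commGraph P).exists_isNClique_cliqueNum
    rw [← ht.2]
    exact clique_card_le ht.1 hcase1 hcase2 hM1
      (fun n m hn hm ho => hub (n * m) ⟨n, m, hn, hm, ho, rfl⟩)
  · obtain ⟨n, m, hn, hm, ⟨Λ', I', hΛc, hIc, hO⟩, hMeq⟩ := hMmem
    set t : Finset (I × G × Λ) := I' ×ˢ (Finset.univ : Finset G) ×ˢ Λ' with htdef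
    have htc : t.card = m * (Fintype.card G * n) := by
      rw [htdef, Finset.card_product, Finset.card_product, hIc, hΛc, Finset.card_univ]
    have hclique : (commGraph P).IsClique ↑t := by
      intro a ha b hb hab
      simp only [Finset.mem_coe, htdef, Finset.mem_product] at ha hb
      obtain ⟨i, x, l⟩ := a
      obtain ⟨j, y, mu⟩ := b
      refine ⟨hab, ?_⟩
      show (P l j).map _ = (P mu i).map _
      rw [hO l ha.2.2 j hb.1, hO mu hb.2.2 i ha.1]
      simp
    have := SimpleGraph.IsClique.card_le_cliqueNum (tc := hclique)
    calc Fintype.card G * M = t.card := by rw [htc, hMeq]; ring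
      _ ≤ (commGraph P).cliqueNum := this
end

section
/- Let G be a trivial group, I and Λ finite index sets, and P a regular Λ×I matrix with entries in G⁰ containing at least one zero entry. If none of the matrices D₃, O_{1×3}, O_{3×1}, O_{2×2}, A, Aᵀ, B, Bᵀ is a ↔-submatrix of the zero-pattern of P, where A = [[0,0,×,×],[×,×,0,0]] and B = [[0,0,×],[×,0,0]], then the commuting graph C(M⁰[G;I,Λ;P]) contains no cycles. -/
variable {G : Type*} [Group G] {I Λ : Type*}

/-- The matrix `A = [[0,0,×,×],[×,×,0,0]]` is a ↔-submatrix of the zero-pattern of `P`. -/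
def ASub (P : Λ → I → Option G) : Prop :=
  ∃ (i₁ i₂ i₃ i₄ : I) (l₁ l₂ : Λ),
    i₁ ≠ i₂ ∧ i₁ ≠ i₃ ∧ i₁ ≠ i₄ ∧ i₂ ≠ i₃ ∧ i₂ ≠ i₄ ∧ i₃ ≠ i₄ ∧ l₁ ≠ l₂ ∧
    P l₁ i₁ = none ∧ P l₁ i₂ = none ∧ P l₂ i₃ = none ∧ P l₂ i₄ = none ∧
    P l₁ i₃ ≠ none ∧ P l₁ i₄ ≠ none ∧ P l₂ i₁ ≠ none ∧ P l₂ i₂ ≠ none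

/-- The matrix `Aᵀ` is a ↔-submatrix of the zero-pattern of `P`. -/
def ATSub (P : Λ → I → Option G) : Prop :=
  ∃ (l₁ l₂ l₃ l₄ : Λ) (i₁ i₂ : I),
    l₁ ≠ l₂ ∧ l₁ ≠ l₃ ∧ l₁ ≠ l₄ ∧ l₂ ≠ l₃ ∧ l₂ ≠ l₄ ∧ l₃ ≠ l₄ ∧ i₁ ≠ i₂ ∧
    P l₁ i₁ = none ∧ P l₂ i₁ = none ∧ P l₃ i₂ = none ∧ P l₄ i₂ = none ∧
    P l₃ i₁ ≠ none ∧ P l₄ i₁ ≠ none ∧ P l₁ i₂ ≠ none ∧ P l₂ i₂ ≠ none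

/-- The matrix `B = [[0,0,×],[×,0,0]]` is a ↔-submatrix of the zero-pattern of `P`. -/
def BSub (P : Λ → I → Option G) : Prop :=
  ∃ (i₁ i₂ i₃ : I) (l₁ l₂ : Λ),
    i₁ ≠ i₂ ∧ i₁ ≠ i₃ ∧ i₂ ≠ i₃ ∧ l₁ ≠ l₂ ∧
    P l₁ i₁ = none ∧ P l₁ i₂ = none ∧ P l₂ i₂ = none ∧ P l₂ i₃ = none ∧
    P l₁ i₃ ≠ none ∧ P l₂ i₁ ≠ none

/-- The matrix `Bᵀ` is a ↔-submatrix of the zero-pattern of `P`. -/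
def BTSub (P : Λ → I → Option G) : Prop :=
  ∃ (l₁ l₂ l₃ : Λ) (i₁ i₂ : I),
    l₁ ≠ l₂ ∧ l₁ ≠ l₃ ∧ l₂ ≠ l₃ ∧ i₁ ≠ i₂ ∧
    P l₁ i₁ = none ∧ P l₂ i₁ = none ∧ P l₂ i₂ = none ∧ P l₃ i₂ = none ∧
    P l₃ i₁ ≠ none ∧ P l₁ i₂ ≠ none

section CorePattern

variable {X Y : Type*}

/-- No row contains three zeros (at pairwise distinct columns). -/
def NoRow3 (z : X → Y → Prop) : Prop :=
  ∀ l a b c, a ≠ b → a ≠ c → b ≠ c → z l a → z l b → z l c → False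

/-- No all-zero 2×2 block. -/
def No22 (z : X → Y → Prop) : Prop :=
  ∀ l l' a b, l ≠ l' → a ≠ b → z l a → z l b → z l' a → z l' b → False

/-- No 3×3 submatrix whose off-diagonal entries are all zero. -/
def NoC6 (z : X → Y → Prop) : Prop :=
  ∀ l1 l2 l3 a1 a2 a3, l1 ≠ l2 → l1 ≠ l3 → l2 ≠ l3 → a1 ≠ a2 → a1 ≠ a3 → a2 ≠ a3 →
    z l1 a2 → z l1 a3 → z l2 a1 → z l2 a3 → z l3 a1 → z l3 a2 → False

/-- No two disjoint row-cherries. -/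
def NoAp (z : X → Y → Prop) : Prop :=
  ∀ l l' a b c d, l ≠ l' → a ≠ b → a ≠ c → a ≠ d → b ≠ c → b ≠ d → c ≠ d →
    z l a → z l b → z l' c → z l' d → False

/-- No 4-edge zero path (row version). -/
def NoBp (z : X → Y → Prop) : Prop :=
  ∀ l l' a b c, l ≠ l' → a ≠ b → a ≠ c → b ≠ c →
    z l a → z l b → z l' b → z l' c → False

structure ZHyp (z : X → Y → Prop) : Prop where
  r3 : NoRow3 z
  c3 : NoRow3 (flip z)
  h22 : No22 z
  c6 : NoC6 z
  ap : NoAp z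
  apt : NoAp (flip z)
  bp : NoBp z
  bpt : NoBp (flip z)

theorem ZHyp.flip {z : X → Y → Prop} (h : ZHyp z) : ZHyp (flip z) where
  r3 := h.c3
  c3 := h.r3
  h22 := fun l l' a b hll hab z1 z2 z3 z4 => h.h22 a b l l' hab hll z1 z3 z2 z4
  c6 := fun L1 L2 L3 A1 A2 A3 h12 h13 h23 g12 g13 g23 w12 w13 w21 w23 w31 w32 =>
    h.c6 A1 A2 A3 L1 L2 L3 g12 g13 g23 h12 h13 h23 w21 w31 w12 w32 w13 w23
  ap := h.apt
  apt := h.ap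
  bp := h.bpt
  bpt := h.bp

variable {z : X → Y → Prop}

theorem rowsH (h : ZHyp z) {l l' : X} {a b c d : Y} (hll : l ≠ l') (hab : a ≠ b)
    (hcd : c ≠ d) (za : z l a) (zb : z l b) (zc : z l' c) (zd : z l' d) : False := by
  by_cases hac : a = c
  · subst hac
    by_cases hbd : b = d
    · subst hbd; exact h.h22 l l' a b hll hab za zb zc zd
    · exact h.bp l l' b a d hll hab.symm hbd hcd zb za zc zd
  · by_cases had : a = d
    · subst had
      by_cases hbc : b = c
      · subst hbc; exact h.h22 l l' a b hll hab za zb zd zc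
      · exact h.bp l l' b a c hll hab.symm hbc hac zb za zd zc
    · by_cases hbc : b = c
      · subst hbc
        exact h.bp l l' a b d hll hab had hcd za zb zc zd
      · by_cases hbd : b = d
        · subst hbd
          exact h.bp l l' a b c hll hab hac hbc za zb zd zc
        · exact h.ap l l' a b c d hll hab hac had hbc hbd hcd za zb zc zd

theorem col4 (h : ZHyp z) {a : Y} {p q r s : X} (hpr : p ≠ r) (hqs : q ≠ s)
    (z0 : z p a) (z1 : z q a) (z2 : z r a) (z3 : z s a) :
    (p = q ∧ r = s) ∨ (p = s ∧ q = r) := by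
  by_cases e1 : p = q
  · by_cases e2 : r = s
    · exact Or.inl ⟨e1, e2⟩
    · exact (h.c3 a p r s hpr (fun e => hqs (e1.symm.trans e)) e2 z0 z2 z3).elim
  · by_cases e3 : q = r
    · by_cases e4 : p = s
      · exact Or.inr ⟨e4, e3⟩
      · exact (h.c3 a p q s e1 e4 hqs z0 z1 z3).elim
    · exact (h.c3 a p q r e1 hpr e3 z0 z1 z2).elim

theorem coreC3a (h : ZHyp z) {a b : Y} {p q r : X} (hpq : p ≠ q)
    (d02 : a ≠ b ∨ p ≠ r) (d12 : a ≠ b ∨ q ≠ r)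
    (z1 : z p a) (z2 : z p b) (z3 : z q a) (z4 : z q b) (z5 : z r a) : False := by
  by_cases e0 : r = p
  · have hab : a ≠ b := d02.resolve_right (fun hh => hh e0.symm)
    exact h.h22 p q a b hpq hab z1 z2 z3 z4
  · by_cases e1 : r = q
    · have hab : a ≠ b := d12.resolve_right (fun hh => hh e1.symm)
      exact h.h22 p q a b hpq hab z1 z2 z3 z4
    · exact h.c3 a p q r hpq (Ne.symm e0) (Ne.symm e1) z1 z3 z5

theorem coreC3 (h : ZHyp z) {i0 i1 i2 : Y} {l0 l1 l2 : X}
    (d01 : i0 ≠ i1 ∨ l0 ≠ l1) (d02 : i0 ≠ i2 ∨ l0 ≠ l2) (d12 : i1 ≠ i2 ∨ l1 ≠ l2)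
    (z01 : z l0 i1) (z10 : z l1 i0) (z12 : z l1 i2) (z21 : z l2 i1)
    (z20 : z l2 i0) (z02 : z l0 i2) : False := by
  by_cases e01 : i0 = i1
  · have hl : l0 ≠ l1 := d01.resolve_left (fun hh => hh e01)
    have d12' : i0 ≠ i2 ∨ l1 ≠ l2 := by
      rcases d12 with hh | hh
      · exact Or.inl (e01 ▸ hh)
      · exact Or.inr hh
    exact coreC3a h hl d02 d12' (e01 ▸ z01) z02 z10 z12 z20
  · by_cases e02 : i0 = i2
    · have hl : l0 ≠ l2 := d02.resolve_left (fun hh => hh e02)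
      have da : i0 ≠ i1 ∨ l0 ≠ l1 := d01
      have db : i0 ≠ i1 ∨ l2 ≠ l1 := by
        rcases d12 with hh | hh
        · exact Or.inl (fun e => hh (e.symm.trans e02))
        · exact Or.inr hh.symm
      have za : z l0 i0 := by rw [e02]; exact z02
      exact coreC3a h hl da db za z01 z20 z21 z10
    · by_cases e12 : i1 = i2
      · have hl : l1 ≠ l2 := d12.resolve_left (fun hh => hh e12)
        have da : i1 ≠ i0 ∨ l1 ≠ l0 := by
          rcases d01 with hh | hh
          · exact Or.inl hh.symm
          · exact Or.inr hh.symm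
        have db : i1 ≠ i0 ∨ l2 ≠ l0 := by
          rcases d02 with hh | hh
          · exact Or.inl (fun e => hh (e12 ▸ e.symm))
          · exact Or.inr hh.symm
        have za : z l1 i1 := by rw [e12]; exact z12
        exact coreC3a h hl da db za z10 z21 z20 z01
      · by_cases f01 : l0 = l1
        · have da : l0 ≠ l2 ∨ i0 ≠ i2 := d02.symm
          have db : l0 ≠ l2 ∨ i1 ≠ i2 := by
            rcases d12 with hh | hh
            · exact Or.inr hh
            · exact Or.inl (f01 ▸ hh)
          have za : flip z i0 l0 := by show z l0 i0; rw [f01]; exact z10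
          exact coreC3a h.flip e01 da db za z20 z01 z21 z02
        · by_cases f02 : l0 = l2
          · have da : l0 ≠ l1 ∨ i0 ≠ i1 := d01.symm
            have db : l0 ≠ l1 ∨ i2 ≠ i1 := by
              rcases d12 with hh | hh
              · exact Or.inr hh.symm
              · exact Or.inl (fun e => hh (e.symm.trans f02))
            have za : flip z i0 l0 := by show z l0 i0; rw [f02]; exact z20
            exact coreC3a h.flip e02 da db za z10 z02 z12 z01
          · by_cases f12 : l1 = l2
            · have da : l1 ≠ l0 ∨ i1 ≠ i0 := by
                rcases d01 with hh | hh
                · exact Or.inr hh.symm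
                · exact Or.inl hh.symm
              have db : l1 ≠ l0 ∨ i2 ≠ i0 := by
                rcases d02 with hh | hh
                · exact Or.inr hh.symm
                · exact Or.inl (fun e => hh (f12 ▸ e.symm))
              have za : flip z i1 l1 := by show z l1 i1; rw [f12]; exact z21
              exact coreC3a h.flip e12 da db za z01 z12 z02 z10
            · exact h.c6 l0 l1 l2 i0 i1 i2 f01 f02 f12 e01 e02 e12 z01 z02 z10 z12 z20 z21
theorem coreC4 (h : ZHyp z) {i0 i1 i2 i3 : Y} {l0 l1 l2 l3 : X}
    (d01 : i0 ≠ i1 ∨ l0 ≠ l1) (d02 : i0 ≠ i2 ∨ l0 ≠ l2) (d12 : i1 ≠ i2 ∨ l1 ≠ l2)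
    (d13 : i1 ≠ i3 ∨ l1 ≠ l3)
    (zA0 : z l0 i1) (zB0 : z l1 i0) (zA1 : z l1 i2) (zB1 : z l2 i1)
    (zA2 : z l2 i3) (zB2 : z l3 i2) (zA3 : z l3 i0) (zB3 : z l0 i3) : False := by
  by_cases e1 : i1 = i3
  · have hl13 : l1 ≠ l3 := d13.resolve_left (fun hh => hh e1)
    by_cases e2 : i0 = i2
    · have hl02 : l0 ≠ l2 := d02.resolve_left (fun hh => hh e2)
      by_cases e3 : i0 = i1
      · have w0 : z l0 i0 := by rw [e3]; exact zA0
        have w2 : z l2 i0 := by rw [e3]; exact zB1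
        rcases col4 h hl02 hl13 w0 zB0 w2 zA3 with ⟨hx, _⟩ | ⟨_, hy⟩
        · rcases d01 with hh | hh
          · exact hh e3
          · exact hh hx
        · rcases d12 with hh | hh
          · exact hh (e3.symm.trans e2)
          · exact hh hy
      · exact rowsH h.flip (fun e => e3 e.symm) hl02 hl13 zA0 zB1 zB0 zA3
    · exact h.h22 l1 l3 i0 i2 hl13 e2 zB0 zA1 zA3 zB2
  · by_cases e2 : l0 = l2
    · by_cases e4 : l1 = l3
      · by_cases e5 : l0 = l1
        · have g01 : i0 ≠ i1 := d01.resolve_right (fun hh => hh e5)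
          have g02 : i0 ≠ i2 := d02.resolve_right (fun hh => hh e2)
          have g12 : i1 ≠ i2 := d12.resolve_right (fun hh => hh (e5.symm.trans e2))
          have w0 : z l0 i0 := by rw [e5]; exact zB0
          have w2 : z l0 i2 := by rw [e5]; exact zA1
          exact h.r3 l0 i0 i1 i2 g01 g02 g12 w0 zA0 w2
        · have g02 : i0 ≠ i2 := d02.resolve_right (fun hh => hh e2)
          exact rowsH h e5 e1 g02 zA0 zB3 zB0 zA1
      · by_cases e6 : i0 = i2
        · rcases d02 with hh | hh
          · exact hh e6
          · exact hh e2
        · exact h.h22 l1 l3 i0 i2 e4 e6 zB0 zA1 zA3 zB2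
    · exact h.h22 l0 l2 i1 i3 e2 e1 zA0 zB3 zB1 zA2
/-- Case `i0 = i2 = a`, `l0 = l4 = p` of the 5-vertex path; `b = i1`, `c = i3`, `e = i4`,
`q = l1`, `r = l2`, `s = l3`. -/
theorem coreL3 (h : ZHyp z) {a b c : Y} {p q r s : X} (hpr : p ≠ r)
    (dbc : b ≠ c ∨ q ≠ s) (dab : a ≠ b ∨ p ≠ q) (dba : b ≠ a ∨ q ≠ r)
    (z1 : z p b) (z2 : z q a) (z3 : z r b) (z4 : z r c) (z5 : z s a) (z7 : z p c) :
    False := by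
  by_cases ebc : b = c
  · have hqs : q ≠ s := dbc.resolve_left (fun hh => hh ebc)
    by_cases eab : a = b
    · have w1 : z p a := by rw [eab]; exact z1
      have w3 : z r a := by rw [eab]; exact z3
      rcases col4 h hpr hqs w1 z2 w3 z5 with ⟨h1, _⟩ | ⟨_, h2⟩
      · rcases dab with hh | hh
        · exact hh eab
        · exact hh h1
      · rcases dba with hh | hh
        · exact hh eab.symm
        · exact hh h2
    · exact rowsH h.flip (fun e => eab e.symm) hpr hqs z1 z3 z2 z5
  · exact h.h22 p r b c hpr ebc z1 z7 z3 z4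

/-- Case `i0 = i2 = a`, `l2 = l4 = r` of the 5-vertex path; `b = i1`, `c = i3`, `e = i4`,
`p = l0`, `q = l1`, `s = l3`. -/
theorem coreL2 (h : ZHyp z) {a b c e : Y} {p q r s : X} (hpr : p ≠ r) (hae : a ≠ e)
    (d34 : c ≠ e ∨ s ≠ r) (d23 : a ≠ c ∨ r ≠ s)
    (dbc : b ≠ c ∨ q ≠ s) (dab : a ≠ b ∨ p ≠ q) (dba : b ≠ a ∨ q ≠ r)
    (z1 : z p b) (z2 : z q a) (z3 : z r b) (z4 : z r c) (z5 : z s a) (z6 : z s e) :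
    False := by
  by_cases ers : r = s
  · have hac : a ≠ c := d23.resolve_right (fun hh => hh ers)
    have hce : c ≠ e := d34.resolve_right (fun hh => hh ers.symm)
    have w5 : z r a := by rw [ers]; exact z5
    have w6 : z r e := by rw [ers]; exact z6
    exact h.r3 r a c e hac hae hce w5 z4 w6
  · by_cases ebc : b = c
    · have hqs : q ≠ s := dbc.resolve_left (fun hh => hh ebc)
      by_cases eab : a = b
      · have w1 : z p a := by rw [eab]; exact z1
        have w3 : z r a := by rw [eab]; exact z3
        rcases col4 h hpr hqs w1 z2 w3 z5 with ⟨_, h2⟩ | ⟨_, h3⟩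
        · exact ers h2
        · rcases dba with hh | hh
          · exact hh eab.symm
          · exact hh h3
      · exact rowsH h.flip (fun e' => eab e'.symm) hpr hqs z1 z3 z2 z5
    · exact rowsH h ers ebc hae z3 z4 z5 z6

theorem coreP5 (h : ZHyp z) {i0 i1 i2 i3 i4 : Y} {l0 l1 l2 l3 l4 : X}
    (d01 : i0 ≠ i1 ∨ l0 ≠ l1) (d02 : i0 ≠ i2 ∨ l0 ≠ l2) (d04 : i0 ≠ i4 ∨ l0 ≠ l4)
    (d12 : i1 ≠ i2 ∨ l1 ≠ l2) (d13 : i1 ≠ i3 ∨ l1 ≠ l3)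
    (d23 : i2 ≠ i3 ∨ l2 ≠ l3) (d24 : i2 ≠ i4 ∨ l2 ≠ l4) (d34 : i3 ≠ i4 ∨ l3 ≠ l4)
    (zA0 : z l0 i1) (zB0 : z l1 i0) (zA1 : z l1 i2) (zB1 : z l2 i1)
    (zA2 : z l2 i3) (zB2 : z l3 i2) (zA3 : z l3 i4) (zB3 : z l4 i3) : False := by
  by_cases hc1 : i0 ≠ i2 ∧ i0 ≠ i4 ∧ i2 ≠ i4
  · obtain ⟨g1, g2, g3⟩ := hc1
    by_cases e : l1 = l3
    · have w : z l1 i4 := by rw [e]; exact zA3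
      exact h.r3 l1 i0 i2 i4 g1 g2 g3 zB0 zA1 w
    · exact h.bp l1 l3 i0 i2 i4 e g1 g2 g3 zB0 zA1 zB2 zA3
  · by_cases hc2 : l0 ≠ l2 ∧ l0 ≠ l4 ∧ l2 ≠ l4
    · obtain ⟨g1, g2, g3⟩ := hc2
      by_cases e : i1 = i3
      · have w : z l4 i1 := by rw [e]; exact zB3
        exact h.c3 i1 l0 l2 l4 g1 g2 g3 zA0 zB1 w
      · exact h.bpt i1 i3 l0 l2 l4 e g1 g2 g3 zA0 zB1 zA2 zB3
    · have hi : i0 = i2 ∨ i0 = i4 ∨ i2 = i4 := by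
        by_contra hno; push_neg at hno; exact hc1 hno
      have hl : l0 = l2 ∨ l0 = l4 ∨ l2 = l4 := by
        by_contra hno; push_neg at hno; exact hc2 hno
      rcases hi with e | e | e <;> rcases hl with f | f | f
      · -- i0 = i2, l0 = l2 : contradicts d02
        rcases d02 with hh | hh
        · exact hh e
        · exact hh f
      · -- i0 = i2, l0 = l4 : coreL3 directly
        have hpr : l0 ≠ l2 := d02.resolve_left (fun hh => hh e)
        have dba : i1 ≠ i0 ∨ l1 ≠ l2 := by
          rcases d12 with hh | hh
          · exact Or.inl (fun e' => hh (e'.trans e))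
          · exact Or.inr hh
        have w5 : z l3 i0 := by rw [e]; exact zB2
        have w7 : z l0 i3 := by rw [f]; exact zB3
        exact coreL3 h hpr d13 d01 dba zA0 zB0 zB1 zA2 w5 w7
      · -- i0 = i2, l2 = l4 : coreL2 directly
        have hpr : l0 ≠ l2 := d02.resolve_left (fun hh => hh e)
        have hae : i0 ≠ i4 := by
          rcases d24 with hh | hh
          · exact fun e' => hh (e ▸ e')
          · exact absurd f hh
        have d34' : i3 ≠ i4 ∨ l3 ≠ l2 := by
          rcases d34 with hh | hh
          · exact Or.inl hh
          · exact Or.inr (fun e' => hh (e'.trans f))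
        have d23' : i0 ≠ i3 ∨ l2 ≠ l3 := by
          rcases d23 with hh | hh
          · exact Or.inl (fun e' => hh (e.symm.trans e'))
          · exact Or.inr hh
        have dba : i1 ≠ i0 ∨ l1 ≠ l2 := by
          rcases d12 with hh | hh
          · exact Or.inl (fun e' => hh (e'.trans e))
          · exact Or.inr hh
        have w5 : z l3 i0 := by rw [e]; exact zB2
        exact coreL2 h hpr hae d34' d23' d13 d01 dba zA0 zB0 zB1 zA2 w5 zA3
      · -- i0 = i4, l0 = l2 : transposed, coreL3 on flip z
        have hpr : i0 ≠ i2 := d02.resolve_right (fun hh => hh f)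
        have dbc : l1 ≠ l3 ∨ i1 ≠ i3 := d13.symm
        have dab : l0 ≠ l1 ∨ i0 ≠ i1 := d01.symm
        have dba : l1 ≠ l0 ∨ i1 ≠ i2 := by
          rcases d12 with hh | hh
          · exact Or.inr hh
          · exact Or.inl (fun e' => hh (e'.trans f))
        have w5 : flip z i3 l0 := by show z l0 i3; rw [f]; exact zA2
        have w7 : flip z i0 l3 := by show z l3 i0; rw [e]; exact zA3
        exact coreL3 h.flip hpr dbc dab dba zB0 zA0 zA1 zB2 w5 w7
      · -- i0 = i4, l0 = l4 : contradicts d04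
        rcases d04 with hh | hh
        · exact hh e
        · exact hh f
      · -- i0 = i4, l2 = l4 : transposed+reversed, coreL3 on flip z
        have hpr : i4 ≠ i2 := by
          rcases d24 with hh | hh
          · exact hh.symm
          · exact absurd f hh
        have dbc : l3 ≠ l1 ∨ i3 ≠ i1 := by
          rcases d13 with hh | hh
          · exact Or.inr hh.symm
          · exact Or.inl hh.symm
        have dab : l4 ≠ l3 ∨ i4 ≠ i3 := by
          rcases d34 with hh | hh
          · exact Or.inr hh.symm
          · exact Or.inl hh.symm
        have dba : l3 ≠ l4 ∨ i3 ≠ i2 := by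
          rcases d23 with hh | hh
          · exact Or.inr hh.symm
          · exact Or.inl (fun e' => hh (f.trans e'.symm))
        have w5 : flip z i1 l4 := by show z l4 i1; rw [← f]; exact zB1
        have w7 : flip z i4 l1 := by show z l1 i4; rw [← e]; exact zB0
        exact coreL3 h.flip hpr dbc dab dba zA3 zB3 zB2 zA1 w5 w7
      · -- i2 = i4, l0 = l2 : reversed, coreL2
        have hpr : l4 ≠ l2 := by
          rcases d24 with hh | hh
          · exact absurd e hh
          · exact hh.symm
        have hae : i4 ≠ i0 := by
          rcases d02 with hh | hh
          · exact fun e' => hh (e'.symm.trans e.symm)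
          · exact absurd f hh
        have d34' : i1 ≠ i0 ∨ l1 ≠ l2 := by
          rcases d01 with hh | hh
          · exact Or.inl hh.symm
          · exact Or.inr (fun e' => hh (e'.trans f.symm).symm)
        have d23' : i4 ≠ i1 ∨ l2 ≠ l1 := by
          rcases d12 with hh | hh
          · exact Or.inl (fun e' => hh (e'.symm.trans e.symm))
          · exact Or.inr hh.symm
        have dbc : i3 ≠ i1 ∨ l3 ≠ l1 := by
          rcases d13 with hh | hh
          · exact Or.inl hh.symm
          · exact Or.inr hh.symm
        have dab : i4 ≠ i3 ∨ l4 ≠ l3 := by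
          rcases d34 with hh | hh
          · exact Or.inl hh.symm
          · exact Or.inr hh.symm
        have dba : i3 ≠ i4 ∨ l3 ≠ l2 := by
          rcases d23 with hh | hh
          · exact Or.inl (fun e' => hh (e.trans e'.symm))
          · exact Or.inr hh.symm
        have w5 : z l1 i4 := by rw [← e]; exact zA1
        exact coreL2 h hpr hae d34' d23' dbc dab dba zB3 zA3 zA2 zB1 w5 zB0
      · -- i2 = i4, l0 = l4 : reversed, coreL3
        have hpr : l4 ≠ l2 := by
          rcases d24 with hh | hh
          · exact absurd e hh
          · exact hh.symm
        have dbc : i3 ≠ i1 ∨ l3 ≠ l1 := by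
          rcases d13 with hh | hh
          · exact Or.inl hh.symm
          · exact Or.inr hh.symm
        have dab : i4 ≠ i3 ∨ l4 ≠ l3 := by
          rcases d34 with hh | hh
          · exact Or.inl hh.symm
          · exact Or.inr hh.symm
        have dba : i3 ≠ i4 ∨ l3 ≠ l2 := by
          rcases d23 with hh | hh
          · exact Or.inl (fun e' => hh (e.trans e'.symm))
          · exact Or.inr hh.symm
        have w5 : z l1 i4 := by rw [← e]; exact zA1
        have w7 : z l4 i1 := by rw [← f]; exact zA0
        exact coreL3 h hpr dbc dab dba zB3 zA3 zA2 zB1 w5 w7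
      · -- i2 = i4, l2 = l4 : contradicts d24
        rcases d24 with hh | hh
        · exact hh e
        · exact hh f
end CorePattern

section Graph
variable {V : Type*} {Gr : SimpleGraph V}

theorem getVert_inj_of_support_nodup {u w : V} (p : Gr.Walk u w) (hnd : p.support.Nodup) :
    ∀ j k, j ≤ p.length → k ≤ p.length → p.getVert j = p.getVert k → j = k := by
  induction p with
  | nil =>
    intro j k hj hk _
    simp only [SimpleGraph.Walk.length_nil, Nat.le_zero] at hj hk
    rw [hj, hk]
  | @cons a b c hadj q ih =>
    rw [SimpleGraph.Walk.support_cons, List.nodup_cons] at hnd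
    intro j k hj hk he
    match j, k with
    | 0, 0 => rfl
    | 0, k + 1 =>
      exfalso
      apply hnd.1
      rw [SimpleGraph.Walk.mem_support_iff_exists_getVert]
      refine ⟨k, ?_, ?_⟩
      · exact (he.symm : q.getVert k = a)
      · simpa [SimpleGraph.Walk.length_cons] using Nat.lt_succ_iff.mp (Nat.lt_of_lt_of_le (Nat.lt_succ_self k) hk)
    | j + 1, 0 =>
      exfalso
      apply hnd.1
      rw [SimpleGraph.Walk.mem_support_iff_exists_getVert]
      refine ⟨j, ?_, ?_⟩
      · exact (he : q.getVert j = a)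
      · simpa [SimpleGraph.Walk.length_cons] using Nat.lt_succ_iff.mp (Nat.lt_of_lt_of_le (Nat.lt_succ_self j) hj)
    | j + 1, k + 1 =>
      have := ih hnd.2 j k (by simpa [SimpleGraph.Walk.length_cons] using hj)
        (by simpa [SimpleGraph.Walk.length_cons] using hk) he
      rw [this]

theorem cycle_getVert_inj {v : V} {p : Gr.Walk v v} (hc : p.IsCycle) :
    ∀ j k, j < p.length → k < p.length → p.getVert j = p.getVert k → j = k := by
  cases p with
  | nil => exact absurd rfl hc.ne_nil
  | @cons a b c hadj q =>
    have hnd : q.support.Nodup := by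
      have := hc.support_nodup
      rwa [SimpleGraph.Walk.support_cons, List.tail_cons] at this
    intro j k hj hk he
    rw [SimpleGraph.Walk.length_cons] at hj hk
    match j, k with
    | 0, 0 => rfl
    | 0, k + 1 =>
      exfalso
      have hk' : k < q.length := Nat.lt_of_succ_lt_succ hk
      have : k = q.length := getVert_inj_of_support_nodup q hnd k q.length (le_of_lt hk')
        le_rfl (by rw [SimpleGraph.Walk.getVert_length]; exact (he.symm : q.getVert k = v))
      omega
    | j + 1, 0 =>
      exfalso
      have hj' : j < q.length := Nat.lt_of_succ_lt_succ hj
      have : j = q.length := getVert_inj_of_support_nodup q hnd j q.length (le_of_lt hj')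
        le_rfl (by rw [SimpleGraph.Walk.getVert_length]; exact (he : q.getVert j = v))
      omega
    | j + 1, k + 1 =>
      have := getVert_inj_of_support_nodup q hnd j k (by omega) (by omega) he
      rw [this]

end Graph

section Bridge
variable {G : Type*} [Group G] {I Λ : Type*}

theorem mkHyp (P : Λ → I → Option G)
    (hD3 : ¬ DSub P 3) (hO13 : ¬ OSub P 1 3) (hO31 : ¬ OSub P 3 1) (hO22 : ¬ OSub P 2 2)
    (hA : ¬ ASub P) (hAT : ¬ ATSub P) (hB : ¬ BSub P) (hBT : ¬ BTSub P) :
    ZHyp (fun l i => P l i = none) := by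
  classical
  have r3 : NoRow3 (fun l i => P l i = none) := by
    intro l a b c hab hac hbc za zb zc
    refine hO13 ⟨{l}, {a, b, c}, Finset.card_singleton l, ?_, ?_⟩
    · rw [Finset.card_insert_of_notMem (by simp [hab, hac]),
        Finset.card_insert_of_notMem (by simp [hbc]), Finset.card_singleton]
    · intro l' hl' i hi
      simp only [Finset.mem_singleton] at hl'
      simp only [Finset.mem_insert, Finset.mem_singleton] at hi
      subst hl'
      rcases hi with rfl | rfl | rfl <;> assumption
  have c3 : NoRow3 (flip (fun l i => P l i = none)) := by
    intro a p q r hpq hpr hqr zp zq zr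
    refine hO31 ⟨{p, q, r}, {a}, ?_, Finset.card_singleton a, ?_⟩
    · rw [Finset.card_insert_of_notMem (by simp [hpq, hpr]),
        Finset.card_insert_of_notMem (by simp [hqr]), Finset.card_singleton]
    · intro l' hl' i hi
      simp only [Finset.mem_singleton] at hi
      simp only [Finset.mem_insert, Finset.mem_singleton] at hl'
      subst hi
      rcases hl' with rfl | rfl | rfl <;> assumption
  have h22 : No22 (fun l i => P l i = none) := by
    intro l l' a b hll hab z1 z2 z3 z4
    refine hO22 ⟨{l, l'}, {a, b}, ?_, ?_, ?_⟩
    · rw [Finset.card_insert_of_notMem (by simp [hll]), Finset.card_singleton]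
    · rw [Finset.card_insert_of_notMem (by simp [hab]), Finset.card_singleton]
    · intro x hx i hi
      simp only [Finset.mem_insert, Finset.mem_singleton] at hx hi
      rcases hx with rfl | rfl <;> rcases hi with rfl | rfl <;> assumption
  have c6 : NoC6 (fun l i => P l i = none) := by
    intro l1 l2 l3 a1 a2 a3 h12 h13 h23 g12 g13 g23 w12 w13 w21 w23 w31 w32
    refine hD3 ⟨![a1, a2, a3], ![l1, l2, l3], ?_, ?_, ?_, ?_⟩
    · intro j j' hjj'
      fin_cases j <;> fin_cases j' <;> simp_all
    · intro j j' hjj'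
      fin_cases j <;> fin_cases j' <;> simp_all
    · intro j
      fin_cases j <;> simp only [Matrix.cons_val_zero, Matrix.cons_val_one, Matrix.head_cons,
        Matrix.cons_val_two, Matrix.tail_cons]
      · exact fun hz => r3 l1 a1 a2 a3 g12 g13 g23 hz w12 w13
      · exact fun hz => r3 l2 a1 a2 a3 g12 g13 g23 w21 hz w23
      · exact fun hz => r3 l3 a1 a2 a3 g12 g13 g23 w31 w32 hz
    · intro j j' hjj'
      fin_cases j <;> fin_cases j' <;>
        simp only [Matrix.cons_val_zero, Matrix.cons_val_one, Matrix.head_cons,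
          Matrix.cons_val_two, Matrix.tail_cons] <;>
        first
          | exact absurd rfl hjj'
          | assumption
  have ap : NoAp (fun l i => P l i = none) := by
    intro l l' a b c d hll hab hac had hbc hbd hcd z1 z2 z3 z4
    by_cases n1 : P l c = none
    · exact r3 l a b c hab hac hbc z1 z2 n1
    by_cases n2 : P l d = none
    · exact r3 l a b d hab had hbd z1 z2 n2
    by_cases n3 : P l' a = none
    · exact r3 l' a c d hac had hcd n3 z3 z4
    by_cases n4 : P l' b = none
    · exact r3 l' b c d hbc hbd hcd n4 z3 z4
    exact hA ⟨a, b, c, d, l, l', hab, hac, had, hbc, hbd, hcd, hll,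
      z1, z2, z3, z4, n1, n2, n3, n4⟩
  have apt : NoAp (flip (fun l i => P l i = none)) := by
    intro l l' a b c d hll hab hac had hbc hbd hcd z1 z2 z3 z4
    by_cases n1 : P c l = none
    · exact c3 l a b c hab hac hbc z1 z2 n1
    by_cases n2 : P d l = none
    · exact c3 l a b d hab had hbd z1 z2 n2
    by_cases n3 : P a l' = none
    · exact c3 l' a c d hac had hcd n3 z3 z4
    by_cases n4 : P b l' = none
    · exact c3 l' b c d hbc hbd hcd n4 z3 z4
    exact hAT ⟨a, b, c, d, l, l', hab, hac, had, hbc, hbd, hcd, hll,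
      z1, z2, z3, z4, n1, n2, n3, n4⟩
  have bp : NoBp (fun l i => P l i = none) := by
    intro l l' a b c hll hab hac hbc z1 z2 z3 z4
    by_cases n1 : P l c = none
    · exact r3 l a b c hab hac hbc z1 z2 n1
    by_cases n2 : P l' a = none
    · exact r3 l' a b c hab hac hbc n2 z3 z4
    exact hB ⟨a, b, c, l, l', hab, hac, hbc, hll, z1, z2, z3, z4, n1, n2⟩
  have bpt : NoBp (flip (fun l i => P l i = none)) := by
    intro l l' a b c hll hab hac hbc z1 z2 z3 z4
    by_cases n1 : P c l = none
    · exact c3 l a b c hab hac hbc z1 z2 n1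
    by_cases n2 : P a l' = none
    · exact c3 l' a b c hab hac hbc n2 z3 z4
    exact hBT ⟨a, b, c, l, l', hab, hac, hbc, hll, z1, z2, z3, z4, n1, n2⟩
  exact ⟨r3, c3, h22, c6, ap, apt, bp, bpt⟩


theorem adjZ {P : Λ → I → Option G} (htriv : ∀ x : G, x = 1) {a b : I × G × Λ}
    (hab : (commGraph P).Adj a b) :
    (a.1 ≠ b.1 ∨ a.2.2 ≠ b.2.2) ∧ P a.2.2 b.1 = none ∧ P b.2.2 a.1 = none := by
  obtain ⟨i, x, l⟩ := a
  obtain ⟨j, y, m⟩ := b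
  obtain ⟨hne, he⟩ := hab
  have hxy : x = y := (htriv x).trans (htriv y).symm
  have he' : (P l j).map (fun p => (i, x * p * y, m)) =
      (P m i).map (fun p => (j, y * p * x, l)) := he
  simp only
  have key : P l j = none ∧ P m i = none := by
    cases hpl : P l j with
    | none =>
      cases hpm : P m i with
      | none => exact ⟨rfl, rfl⟩
      | some q => rw [hpl, hpm] at he'; simp at he'
    | some p =>
      cases hpm : P m i with
      | none => rw [hpl, hpm] at he'; simp at he'
      | some q =>
        rw [hpl, hpm] at he'
        simp only [Option.map_some, Option.some.injEq, Prod.mk.injEq] at he'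
        obtain ⟨h1, _, h2⟩ := he'
        exact absurd (by rw [h1, hxy, h2] : (i, x, l) = (j, y, m)) hne
  refine ⟨?_, key⟩
  rcases eq_or_ne i j with rfl | hij
  · rcases eq_or_ne l m with rfl | hlm
    · exact absurd (by rw [hxy] : (i, x, l) = (i, y, l)) hne
    · exact Or.inr hlm
  · exact Or.inl hij


end Bridge

/-- If `G` is trivial and none of `D₃, O_{1×3}, O_{3×1}, O_{2×2}, A, Aᵀ, B, Bᵀ` is a
↔-submatrix of the zero-pattern of `P`, then `C(M⁰[G;I,Λ;P])` contains no cycles. -/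
theorem stmt_15 [Fintype I] [Fintype Λ] (P : Λ → I → Option G)
    (htriv : ∀ x : G, x = 1)
    (hrow : ∀ l : Λ, ∃ i : I, P l i ≠ none)
    (hcol : ∀ i : I, ∃ l : Λ, P l i ≠ none)
    (hzero : ∃ (i : I) (l : Λ), P l i = none)
    (hD3 : ¬ DSub P 3) (hO13 : ¬ OSub P 1 3) (hO31 : ¬ OSub P 3 1) (hO22 : ¬ OSub P 2 2)
    (hA : ¬ ASub P) (hAT : ¬ ATSub P) (hB : ¬ BSub P) (hBT : ¬ BTSub P) :
    (commGraph P).IsAcyclic := by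
  classical
  have hyp : ZHyp (fun l i => P l i = none) := mkHyp P hD3 hO13 hO31 hO22 hA hAT hB hBT
  intro v c hc
  have h3 := hc.three_le_length
  have hadj : ∀ k, k < c.length → (commGraph P).Adj (c.getVert k) (c.getVert (k + 1)) :=
    fun k hk => c.adj_getVert_succ hk
  have hinj := cycle_getVert_inj hc
  have hz : ∀ k, k < c.length → P (c.getVert k).2.2 (c.getVert (k + 1)).1 = none ∧
      P (c.getVert (k + 1)).2.2 (c.getVert k).1 = none :=
    fun k hk => (adjZ htriv (hadj k hk)).2
  have hne : ∀ j k, j < c.length → k < c.length → j ≠ k →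
      ((c.getVert j).1 ≠ (c.getVert k).1 ∨ (c.getVert j).2.2 ≠ (c.getVert k).2.2) := by
    intro j k hj hk hjk
    by_contra hcon
    push_neg at hcon
    obtain ⟨h1, h2⟩ := hcon
    refine hjk (hinj j k hj hk ?_)
    have hm : (c.getVert j).2.1 = (c.getVert k).2.1 := (htriv _).trans (htriv _).symm
    exact Prod.ext h1 (Prod.ext hm h2)
  have hwrap : c.getVert c.length = c.getVert 0 := by
    rw [c.getVert_length, c.getVert_zero]
  have hn3 : c.length = 3 ∨ c.length = 4 ∨ 5 ≤ c.length := by omega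
  rcases hn3 with hn | hn | hn
  · have e3 : c.getVert 3 = c.getVert 0 := by rw [← hn]; exact hwrap
    have w1 : P (c.getVert 2).2.2 (c.getVert 0).1 = none := by
      have := (hz 2 (by omega)).1; rwa [e3] at this
    have w2 : P (c.getVert 0).2.2 (c.getVert 2).1 = none := by
      have := (hz 2 (by omega)).2; rwa [e3] at this
    exact coreC3 hyp (hne 0 1 (by omega) (by omega) (by omega))
      (hne 0 2 (by omega) (by omega) (by omega)) (hne 1 2 (by omega) (by omega) (by omega))
      (hz 0 (by omega)).1 (hz 0 (by omega)).2 (hz 1 (by omega)).1 (hz 1 (by omega)).2 w1 w2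
  · have e4 : c.getVert 4 = c.getVert 0 := by rw [← hn]; exact hwrap
    have w1 : P (c.getVert 3).2.2 (c.getVert 0).1 = none := by
      have := (hz 3 (by omega)).1; rwa [e4] at this
    have w2 : P (c.getVert 0).2.2 (c.getVert 3).1 = none := by
      have := (hz 3 (by omega)).2; rwa [e4] at this
    exact coreC4 hyp (hne 0 1 (by omega) (by omega) (by omega))
      (hne 0 2 (by omega) (by omega) (by omega)) (hne 1 2 (by omega) (by omega) (by omega))
      (hne 1 3 (by omega) (by omega) (by omega))
      (hz 0 (by omega)).1 (hz 0 (by omega)).2 (hz 1 (by omega)).1 (hz 1 (by omega)).2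
      (hz 2 (by omega)).1 (hz 2 (by omega)).2 w1 w2
  · exact coreP5 hyp (hne 0 1 (by omega) (by omega) (by omega))
      (hne 0 2 (by omega) (by omega) (by omega)) (hne 0 4 (by omega) (by omega) (by omega))
      (hne 1 2 (by omega) (by omega) (by omega)) (hne 1 3 (by omega) (by omega) (by omega))
      (hne 2 3 (by omega) (by omega) (by omega)) (hne 2 4 (by omega) (by omega) (by omega))
      (hne 3 4 (by omega) (by omega) (by omega))
      (hz 0 (by omega)).1 (hz 0 (by omega)).2 (hz 1 (by omega)).1 (hz 1 (by omega)).2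
      (hz 2 (by omega)).1 (hz 2 (by omega)).2 (hz 3 (by omega)).1 (hz 3 (by omega)).2
end

section
/- Let G be a finite group, I and Λ finite index sets, and P a regular Λ×I matrix with entries in G⁰ containing at least one zero entry. (1) If |G| ≥ 3, then C(M⁰[G;I,Λ;P]) contains a cycle and its girth equals 3. (2) If |G| = 2, then C(M⁰[G;I,Λ;P]) contains a cycle if and only if P contains more than one zero entry, in which case its girth equals 3. -/
variable {G : Type*} [Group G] {I Λ : Type*}

open SimpleGraph in
lemma triangle_girth' {V : Type*} {H : SimpleGraph V} {a b c : V}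
    (hab : H.Adj a b) (hbc : H.Adj b c) (hca : H.Adj c a) :
    ¬ H.IsAcyclic ∧ H.girth = 3 := by
  set w : H.Walk a a := .cons hab (.cons hbc (.cons hca .nil)) with hw
  have hcyc : w.IsCycle := by
    simp [hw, Walk.isCycle_def, Walk.isTrail_def, hab.ne, hbc.ne, hca.ne, hca.ne',
      hab.ne', hbc.ne', Sym2.eq_iff]
  have hnac : ¬ H.IsAcyclic := fun h => h w hcyc
  refine ⟨hnac, le_antisymm ?_ (H.three_le_girth hnac)⟩
  have h1 : H.egirth ≤ 3 := by
    have := iInf_le (fun (_ : w.IsCycle) => (w.length : ℕ∞)) hcyc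
    have h2 := iInf_le (fun (w' : H.Walk a a) => ⨅ _ : w'.IsCycle, (w'.length : ℕ∞)) w
    have h3 := iInf_le (fun (a : V) => ⨅ w' : H.Walk a a, ⨅ _ : w'.IsCycle, (w'.length : ℕ∞)) a
    calc H.egirth ≤ _ := h3
      _ ≤ _ := h2
      _ ≤ (w.length : ℕ∞) := this
      _ = 3 := by simp [hw]
  calc H.girth = H.egirth.toNat := rfl
    _ ≤ (3 : ℕ∞).toNat := ENat.toNat_le_toNat h1 (by simp)
    _ = 3 := rfl

open SimpleGraph in
lemma acyclic_of_unique_nbr' {V : Type*} {H : SimpleGraph V}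
    (h : ∀ a b c : V, H.Adj a b → H.Adj a c → b = c) : H.IsAcyclic := by
  intro a p hp
  have hnil : ¬ p.Nil := hp.not_nil
  obtain ⟨b, hadj, q, rfl⟩ := Walk.not_nil_iff.mp hnil
  have h3 := hp.three_le_length
  have hqnil : ¬ q.reverse.Nil := by
    rw [Walk.nil_iff_length_eq, Walk.length_reverse]
    simp only [Walk.length_cons] at h3
    omega
  obtain ⟨c, hadj2, q', hqr⟩ := Walk.not_nil_iff.mp hqnil
  have hcb : c = b := (h a b c hadj hadj2).symm
  have hmem : s(a, c) ∈ q.edges := by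
    have : s(a, c) ∈ q.reverse.edges := by rw [hqr]; simp
    simpa [Walk.edges_reverse] using this
  have hnodup := hp.edges_nodup
  rw [Walk.edges_cons] at hnodup
  rw [hcb] at hmem
  exact (List.nodup_cons.mp hnodup).1 hmem

lemma mul_comm_of_card_two [Fintype G] (h : Fintype.card G = 2) (x y : G) :
    x * y = y * x := by
  have sq : ∀ z : G, z * z = 1 := by
    intro z
    have h2 : z ^ Fintype.card G = 1 := pow_card_eq_one
    rw [h, pow_two] at h2
    exact h2
  have inv : ∀ z : G, z⁻¹ = z := fun z => inv_eq_of_mul_eq_one_right (sq z)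
  calc x * y = (x * y)⁻¹ := (inv _).symm
    _ = y⁻¹ * x⁻¹ := mul_inv_rev x y
    _ = y * x := by rw [inv, inv]

/-- (1) If `|G| ≥ 3`, then `C(M⁰[G;I,Λ;P])` contains a cycle and its girth equals `3`.
(2) If `|G| = 2`, then `C(M⁰[G;I,Λ;P])` contains a cycle iff `P` contains more than one
zero entry, in which case its girth equals `3`. -/
theorem stmt_16 [Fintype G] [Fintype I] [Fintype Λ] (P : Λ → I → Option G)
    (hrow : ∀ l : Λ, ∃ i : I, P l i ≠ none)
    (hcol : ∀ i : I, ∃ l : Λ, P l i ≠ none)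
    (hzero : ∃ (i : I) (l : Λ), P l i = none) :
    (3 ≤ Fintype.card G →
      ¬ (commGraph P).IsAcyclic ∧ (commGraph P).girth = 3) ∧
    (Fintype.card G = 2 →
      (¬ (commGraph P).IsAcyclic ↔
        ∃ (i j : I) (l m : Λ), (i, l) ≠ (j, m) ∧ P l i = none ∧ P m j = none) ∧
      ((∃ (i j : I) (l m : Λ), (i, l) ≠ (j, m) ∧ P l i = none ∧ P m j = none) →
        (commGraph P).girth = 3)) := by
  classical
  obtain ⟨i0, l0, hz0⟩ := hzero
  -- adjacency within a zero cell
  have fact1 : ∀ (i : I) (l : Λ) (x y : G), P l i = none → x ≠ y →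
      (commGraph P).Adj (i, x, l) (i, y, l) := by
    intro i l x y hP hxy
    refine ⟨by simp [hxy], ?_⟩
    simp [reesMul, hP]
  -- cross adjacency between two zero entries
  have fact2 : ∀ (i j : I) (l m : Λ) (x y : G), P m j = none → P l i = none →
      (i, x, m) ≠ (j, y, l) → (commGraph P).Adj (i, x, m) (j, y, l) := by
    intro i j l m x y h1 h2 hne
    refine ⟨hne, ?_⟩
    simp [reesMul, h1, h2]
  constructor
  · -- |G| ≥ 3
    intro hcard
    obtain ⟨y, hy⟩ := Fintype.exists_ne_of_one_lt_card (by omega) (1 : G)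
    have hex : ∃ z : G, z ≠ 1 ∧ z ≠ y := by
      by_contra hc
      push_neg at hc
      have hsub : (Finset.univ : Finset G) ⊆ {1, y} := by
        intro z _
        rcases eq_or_ne z 1 with h | h
        · simp [h]
        · simp [hc z h]
      have := Finset.card_le_card hsub
      have h2 : ({1, y} : Finset G).card ≤ 2 := Finset.card_insert_le _ _ |>.trans (by simp)
      rw [Finset.card_univ] at this
      omega
    obtain ⟨z, hz1, hzy⟩ := hex
    exact triangle_girth' (fact1 i0 l0 1 y hz0 (Ne.symm hy))
      (fact1 i0 l0 y z hz0 (Ne.symm hzy)) (fact1 i0 l0 z 1 hz0 hz1)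
  · -- |G| = 2
    intro hcard
    obtain ⟨g, hg⟩ := Fintype.exists_ne_of_one_lt_card (by omega) (1 : G)
    -- two distinct group elements determine each other
    have two_elem : ∀ x y z : G, y ≠ x → z ≠ x → y = z := by
      intro x y z hyx hzx
      by_contra hyz
      have hsub : ({x, y, z} : Finset G).card ≤ Fintype.card G := by
        rw [← Finset.card_univ]; exact Finset.card_le_card (Finset.subset_univ _)
      rw [Finset.card_insert_of_notMem (by simp [Ne.symm hyx, Ne.symm hzx]),
        Finset.card_insert_of_notMem (by simp [hyz]), Finset.card_singleton, hcard] at hsub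
      omega
    -- the triangle construction when there are two distinct zero entries
    have mk_tri : (∃ (i j : I) (l m : Λ), (i, l) ≠ (j, m) ∧ P l i = none ∧ P m j = none) →
        ¬ (commGraph P).IsAcyclic ∧ (commGraph P).girth = 3 := by
      rintro ⟨i, j, l, m, hne, hli, hmj⟩
      -- vertices (i,1,m), (i,g,m), (j,1,l)
      have hvc : ∀ x : G, (i, x, m) ≠ (j, (1 : G), l) := by
        intro x hc
        simp only [Prod.mk.injEq] at hc
        exact hne (by simp [hc.1, hc.2.2])
      have hab : (commGraph P).Adj (i, 1, m) (i, g, m) := by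
        cases hPmi : P m i with
        | none => exact fact1 i m 1 g hPmi (Ne.symm hg)
        | some p =>
          refine ⟨by simp [Ne.symm hg], ?_⟩
          simp only [reesMul, hPmi, Option.map_some]
          congr 2
          rw [one_mul, mul_one, mul_comm_of_card_two hcard]
      have hac : (commGraph P).Adj (i, 1, m) (j, 1, l) := fact2 i j l m 1 1 hmj hli (hvc 1)
      have hbc : (commGraph P).Adj (j, 1, l) (i, g, m) := ((fact2 i j l m g 1 hmj hli (hvc g))).symm
      exact triangle_girth' hab hbc.symm hac.symm
    refine ⟨⟨?_, fun h => (mk_tri h).1⟩, fun h => (mk_tri h).2⟩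
    -- forward: not acyclic → two distinct zero entries
    intro hnac
    by_contra hc
    push_neg at hc
    -- all zero entries coincide
    have huniq : ∀ (i : I) (l : Λ), P l i = none → (i, l) = (i0, l0) := by
      intro i l hP
      by_contra hne
      exact hc i i0 l l0 hne hP hz0
    -- every edge joins two vertices in the same cell
    have hadj_struct : ∀ (i j : I) (x y : G) (l m : Λ),
        (commGraph P).Adj (i, x, l) (j, y, m) → i = j ∧ l = m := by
      intro i j x y l m ⟨hne, heq⟩
      simp only [reesMul] at heq
      cases hPlj : P l j with
      | none =>
        cases hPmi : P m i with
        | none =>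
          have h1 := huniq j l hPlj
          have h2 := huniq i m hPmi
          simp only [Prod.mk.injEq] at h1 h2
          exact ⟨h2.1.trans h1.1.symm, h1.2.trans h2.2.symm⟩
        | some q => rw [hPlj, hPmi] at heq; simp at heq
      | some p =>
        cases hPmi : P m i with
        | none => rw [hPlj, hPmi] at heq; simp at heq
        | some q =>
          rw [hPlj, hPmi] at heq
          simp only [Option.map_some, Option.some_inj, Prod.mk.injEq] at heq
          exact ⟨heq.1, heq.2.2.symm⟩
    apply hnac
    apply acyclic_of_unique_nbr'
    rintro ⟨i, x, l⟩ ⟨j, y, m⟩ ⟨k, z, n⟩ h1 h2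
    obtain ⟨rfl, rfl⟩ := hadj_struct i j x y l m h1
    obtain ⟨rfl, rfl⟩ := hadj_struct i k x z l n h2
    have hxy : y ≠ x := by
      intro h; exact h1.1 (by rw [h])
    have hxz : z ≠ x := by
      intro h; exact h2.1 (by rw [h])
    rw [two_elem x y z hxy hxz]
end
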